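/- For each t ∈ {0,1,…,T−1} and each x ∈ ℤ, the first difference ΔW_t(x,k) = W_t(x+1,k) − W_t(x,k) is non-increasing in k: if k ≤ k' then W_t(x+1,k') − W_t(x,k') ≤ W_t(x+1,k) − W_t(x,k). -/

import Mathlib

open Filter

/-- Negative Binomial pmf with real shape `r` and success probability `p`:
`NB(r,p)(z) = Γ(z+r)/(Γ(r)·z!)·p^r·(1−p)^z` for `r > 0`, and `NB(0,p)` is
the point mass at `0`. -/
noncomputable def NB (r p : ℝ) (z : ℕ) : ℝ :=
  if r = 0 then (if z = 0 then (1 : ℝ) else 0)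
  else Real.Gamma ((z : ℝ) + r) / (Real.Gamma r * (Nat.factorial z : ℝ)) * p ^ r * (1 - p) ^ z

set_option maxHeartbeats 1000000

section Aux
open Finset

noncomputable def coef (r : ℝ) (z : ℕ) : ℝ :=
  Real.Gamma ((z:ℝ) + r) / (Real.Gamma r * (Nat.factorial z : ℝ))

lemma coef_pos {r : ℝ} (hr : 0 < r) (z : ℕ) : 0 < coef r z := by
  apply div_pos (Real.Gamma_pos_of_pos (by positivity))
  exact mul_pos (Real.Gamma_pos_of_pos hr) (by exact_mod_cast z.factorial_pos)

lemma coef_zero {r : ℝ} (hr : 0 < r) : coef r 0 = 1 := by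
  have := (Real.Gamma_pos_of_pos hr).ne'
  simp [coef, this]

lemma coef_one (z : ℕ) : coef 1 z = 1 := by
  simp [coef, Real.Gamma_one, Real.Gamma_nat_eq_factorial]
  exact Nat.factorial_ne_zero z

lemma coef_succ_mul {r : ℝ} (hr : 0 < r) (z : ℕ) :
    ((z:ℝ)+1) * coef r (z+1) = ((z:ℝ) + r) * coef r z := by
  have h1 : ((z:ℝ) + 1) + r = ((z:ℝ) + r) + 1 := by ring
  have h2 : Real.Gamma (((z:ℝ) + r) + 1) = ((z:ℝ)+r) * Real.Gamma ((z:ℝ)+r) :=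
    Real.Gamma_add_one (by positivity)
  have hΓ := (Real.Gamma_pos_of_pos hr).ne'
  have hf : (Nat.factorial (z+1) : ℝ) = ((z:ℝ)+1) * z.factorial := by
    push_cast [Nat.factorial_succ]; ring
  simp only [coef, Nat.cast_add, Nat.cast_one, h1, h2, hf]
  have hzf : (Nat.factorial z : ℝ) ≠ 0 := by exact_mod_cast z.factorial_pos.ne'
  field_simp

lemma coef_step {r : ℝ} (hr : 0 < r) (n : ℕ) :
    coef (r+1) (n+1) = coef (r+1) n + coef r (n+1) := by
  have hΓr := (Real.Gamma_pos_of_pos hr).ne'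
  have hr1 : Real.Gamma (r+1) = r * Real.Gamma r := Real.Gamma_add_one hr.ne'
  have h2 : Real.Gamma (((n:ℝ) + r + 1) + 1) = ((n:ℝ)+r+1) * Real.Gamma ((n:ℝ)+r+1) :=
    Real.Gamma_add_one (by positivity)
  have hf : (Nat.factorial (n+1) : ℝ) = ((n:ℝ)+1) * n.factorial := by
    push_cast [Nat.factorial_succ]; ring
  have hzf : (Nat.factorial n : ℝ) ≠ 0 := by exact_mod_cast n.factorial_pos.ne'
  have e1 : ((n:ℝ)+1) + (r+1) = ((n:ℝ) + r + 1) + 1 := by ring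
  have e2 : ((n:ℝ)) + (r+1) = ((n:ℝ) + r + 1) := by ring
  have e3 : ((n:ℝ)+1) + r = ((n:ℝ) + r + 1) := by ring
  simp only [coef, Nat.cast_add, Nat.cast_one, e1, e2, e3, h2, hf, hr1]
  have hΓ2 := (Real.Gamma_pos_of_pos (show (0:ℝ) < (n:ℝ) + r + 1 by positivity)).ne'
  field_simp
  ring

lemma hockey {r : ℝ} (hr : 0 < r) (n : ℕ) :
    ∑ i ∈ Finset.range (n+1), coef r i = coef (r+1) n := by
  induction n with
  | zero => simp [coef_zero hr, coef_zero (by positivity : (0:ℝ) < r + 1)]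
  | succ n ih => rw [Finset.sum_range_succ, ih, coef_step hr]

lemma sum_swap_tri (f : ℕ → ℕ → ℝ) (n : ℕ) :
    ∑ m ∈ range (n+1), ∑ i ∈ range (m+1), f i (m - i)
      = ∑ i ∈ range (n+1), ∑ j ∈ range (n - i + 1), f i j := by
  induction n with
  | zero => simp
  | succ n ih =>
      have key : ∀ i, i ≤ n → n + 1 - i = (n - i) + 1 := by omega
      calc ∑ m ∈ range (n+1+1), ∑ i ∈ range (m+1), f i (m-i)
          = (∑ m ∈ range (n+1), ∑ i ∈ range (m+1), f i (m-i))
              + ∑ i ∈ range (n+1+1), f i (n+1-i) := Finset.sum_range_succ _ _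
        _ = (∑ i ∈ range (n+1), ∑ j ∈ range (n-i+1), f i j)
              + (∑ i ∈ range (n+1), f i (n+1-i) + f (n+1) 0) := by
              rw [ih, Finset.sum_range_succ (fun i => f i (n+1-i)) (n+1)]
              simp
        _ = ∑ i ∈ range (n+1), (∑ j ∈ range (n-i+1), f i j + f i (n+1-i)) + f (n+1) 0 := by
              rw [Finset.sum_add_distrib]; ring
        _ = ∑ i ∈ range (n+1), ∑ j ∈ range (n+1-i+1), f i j
              + ∑ j ∈ range (n+1-(n+1)+1), f (n+1) j := by
              refine congrArg₂ (·+·) (Finset.sum_congr rfl fun i hi => ?_) ?_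
              · have e1 : n+1-i = n-i+1 := key i (Nat.lt_succ_iff.mp (Finset.mem_range.mp hi))
                rw [e1, Finset.sum_range_succ (f i) (n-i+1)]
              · simp
        _ = ∑ i ∈ range (n+1+1), ∑ j ∈ range (n+1-i+1), f i j :=
              (Finset.sum_range_succ (fun i => ∑ j ∈ range (n+1-i+1), f i j) (n+1)).symm


lemma vandermonde {r : ℝ} (hr : 0 < r) (d : ℕ) (hd : 1 ≤ d) (n : ℕ) :
    ∑ i ∈ Finset.range (n+1), coef r i * coef (d:ℝ) (n - i) = coef (r + d) n := by
  induction d generalizing n with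
  | zero => omega
  | succ d ih =>
      rcases Nat.eq_or_lt_of_le hd with h1 | h2
      · simp only [← h1]
        simp only [Nat.cast_one, coef_one, mul_one]
        rw [hockey hr]
      · have hd' : 1 ≤ d := by omega
        have hcast : ((d+1 : ℕ) : ℝ) = (d:ℝ) + 1 := by push_cast; ring
        have hcast2 : r + ((d+1 : ℕ) : ℝ) = r + (d:ℝ) + 1 := by push_cast; ring
        have key : ∀ m : ℕ, coef ((d:ℝ)+1) m = ∑ j ∈ range (m+1), coef (d:ℝ) j :=
          fun m => (hockey (by exact_mod_cast hd' : (0:ℝ) < (d:ℝ)) m).symm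
        rw [hcast2]
        calc ∑ i ∈ range (n+1), coef r i * coef ((d+1:ℕ):ℝ) (n - i)
            = ∑ i ∈ range (n+1), ∑ j ∈ range (n - i + 1), coef r i * coef (d:ℝ) j := by
              refine Finset.sum_congr rfl fun i _ => ?_
              rw [hcast, key, Finset.mul_sum]
          _ = ∑ m ∈ range (n+1), ∑ i ∈ range (m+1), coef r i * coef (d:ℝ) (m - i) :=
              (sum_swap_tri (fun i j => coef r i * coef (d:ℝ) j) n).symm
          _ = ∑ m ∈ range (n+1), coef (r + d) m := by
              refine Finset.sum_congr rfl fun m _ => ih hd' m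
          _ = coef (r + (d:ℝ) + 1) n := hockey (by positivity) n







section NBlem
variable {p : ℝ}

lemma NB_eq {r : ℝ} (hr : 0 < r) (z : ℕ) : NB r p z = coef r z * p ^ r * (1-p)^z := by
  simp [NB, hr.ne', coef]

lemma NB_zero_eq (z : ℕ) : NB 0 p z = if z = 0 then 1 else 0 := by simp [NB]

lemma NB_nonneg (hp0 : 0 < p) (hp1 : p < 1) {r : ℝ} (hr : 0 ≤ r) (z : ℕ) : 0 ≤ NB r p z := by
  rcases eq_or_lt_of_le hr with h | h
  · rw [← h, NB_zero_eq]
    split <;> norm_num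
  · rw [NB_eq h]
    have := coef_pos h z
    have h1 : (0:ℝ) < 1 - p := by linarith
    positivity

lemma NB_pos (hp0 : 0 < p) (hp1 : p < 1) {r : ℝ} (hr : 0 < r) (z : ℕ) : 0 < NB r p z := by
  rw [NB_eq hr]
  have := coef_pos hr z
  have h1 : (0:ℝ) < 1 - p := by linarith
  positivity

lemma summable_coef_succ (hp0 : 0 < p) (hp1 : p < 1) {r : ℝ} (hr : 0 < r) :
    Summable (fun z : ℕ => coef r z * (1-p)^z * ((z:ℝ)+1)) := by
  have hq0 : (0:ℝ) < 1 - p := by linarith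
  have hq1 : 1 - p < 1 := by linarith
  set q := 1 - p with hq
  set f : ℕ → ℝ := fun z => coef r z * q^z * ((z:ℝ)+1) with hf
  have hfpos : ∀ z, 0 < f z := fun z => by
    have := coef_pos hr z; positivity
  apply summable_of_ratio_test_tendsto_lt_one hq1 (Eventually.of_forall fun n => (hfpos n).ne')
  have hratio : ∀ n : ℕ, ‖f (n+1)‖ / ‖f n‖
      = q * (((n:ℝ)+r)/((n:ℝ)+1)) * (((n:ℝ)+2)/((n:ℝ)+1)) := by
    intro n
    have h1 : coef r (n+1) = ((n:ℝ)+r)/((n:ℝ)+1) * coef r n := by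
      have := coef_succ_mul hr n
      field_simp
      linarith [coef_succ_mul hr n]
    rw [Real.norm_of_nonneg (hfpos (n+1)).le, Real.norm_of_nonneg (hfpos n).le]
    simp only [hf]
    rw [h1]
    have hc := (coef_pos hr n).ne'
    have hqn : q ^ n ≠ 0 := (pow_pos hq0 n).ne'
    have : ((n:ℝ)+1) ≠ 0 := by positivity
    push_cast
    rw [pow_succ]
    field_simp
    ring
  have h1 : Tendsto (fun n : ℕ => ((n:ℝ)+r)/((n:ℝ)+1)) atTop (nhds 1) := by
    have he : (fun n : ℕ => ((n:ℝ)+r)/((n:ℝ)+1)) = fun n : ℕ => 1 + (r-1) * (1/((n:ℝ)+1)) := by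
      funext n
      have : ((n:ℝ)+1) ≠ 0 := by positivity
      field_simp
      ring
    rw [he]
    have := tendsto_one_div_add_atTop_nhds_zero_nat.const_mul (r-1)
    simpa using tendsto_const_nhds.add this
  have h2 : Tendsto (fun n : ℕ => ((n:ℝ)+2)/((n:ℝ)+1)) atTop (nhds 1) := by
    have he : (fun n : ℕ => ((n:ℝ)+2)/((n:ℝ)+1)) = fun n : ℕ => 1 + 1 * (1/((n:ℝ)+1)) := by
      funext n
      have : ((n:ℝ)+1) ≠ 0 := by positivity
      field_simp
      ring
    rw [he]
    have := (tendsto_one_div_add_atTop_nhds_zero_nat (𝕜 := ℝ)).const_mul 1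
    simpa using tendsto_const_nhds.add this
  have : Tendsto (fun n : ℕ => q * (((n:ℝ)+r)/((n:ℝ)+1)) * (((n:ℝ)+2)/((n:ℝ)+1)))
      atTop (nhds q) := by
    have := ((tendsto_const_nhds (x := q)).mul h1).mul h2
    simpa using this
  exact Tendsto.congr (fun n => (hratio n).symm) this

lemma summable_NB_succ (hp0 : 0 < p) (hp1 : p < 1) {r : ℝ} (hr : 0 ≤ r) :
    Summable (fun z : ℕ => NB r p z * ((z:ℝ)+1)) := by
  rcases eq_or_lt_of_le hr with h | h
  · apply summable_of_ne_finset_zero (s := {0})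
    intro z hz
    simp at hz
    simp [NB_zero_eq, ← h, hz]
  · have := (summable_coef_succ hp0 hp1 h).mul_left (p ^ r)
    apply this.congr
    intro z
    rw [NB_eq h]
    ring

lemma summable_NB (hp0 : 0 < p) (hp1 : p < 1) {r : ℝ} (hr : 0 ≤ r) :
    Summable (NB r p) := by
  apply (summable_NB_succ hp0 hp1 hr).of_nonneg_of_le (NB_nonneg hp0 hp1 hr)
  intro z
  have h1 := NB_nonneg hp0 hp1 hr z
  have h2 : (0:ℝ) ≤ (z:ℝ) := Nat.cast_nonneg z
  nlinarith

lemma summable_NB_mul (hp0 : 0 < p) (hp1 : p < 1) {r : ℝ} (hr : 0 ≤ r)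
    {u : ℕ → ℝ} {C : ℝ} (hu0 : ∀ z, 0 ≤ u z) (hu : ∀ z, u z ≤ C * ((z:ℝ)+1)) :
    Summable (fun z => NB r p z * u z) := by
  have hC : 0 ≤ C := by
    have := (hu0 0).trans (hu 0); simpa using this
  apply ((summable_NB_succ hp0 hp1 hr).mul_left C).of_nonneg_of_le
    (fun z => mul_nonneg (NB_nonneg hp0 hp1 hr z) (hu0 z))
  intro z
  have := mul_le_mul_of_nonneg_left (hu z) (NB_nonneg hp0 hp1 hr z)
  calc NB r p z * u z ≤ NB r p z * (C * ((z:ℝ)+1)) := this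
    _ = C * (NB r p z * ((z:ℝ)+1)) := by ring

lemma NB_conv (hp0 : 0 < p) (hp1 : p < 1) {r : ℝ} (hr : 0 < r) (d z : ℕ) :
    ∑ i ∈ range (z+1), NB r p i * NB (d:ℝ) p (z-i) = NB (r + (d:ℝ)) p z := by
  rcases Nat.eq_zero_or_pos d with h | h
  · subst h
    rw [Finset.sum_eq_single z]
    · simp [NB_zero_eq]
    · intro i hi hne
      have : z - i ≠ 0 := by
        have := Finset.mem_range.mp hi; omega
      simp [NB_zero_eq, this]
    · intro h; exact absurd (Finset.self_mem_range_succ z) h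
  · have hd : (0:ℝ) < (d:ℝ) := by exact_mod_cast h
    have key : ∀ i ∈ range (z+1), NB r p i * NB (d:ℝ) p (z-i)
        = (coef r i * coef (d:ℝ) (z-i)) * (p ^ (r + (d:ℝ)) * (1-p)^z) := by
      intro i hi
      have hi' : i ≤ z := Nat.lt_succ_iff.mp (Finset.mem_range.mp hi)
      have hq : (1-p)^i * (1-p)^(z-i) = (1-p)^z := by
        rw [← pow_add, Nat.add_sub_cancel' hi']
      rw [NB_eq hr, NB_eq hd, Real.rpow_add hp0, ← hq]
      ring
    rw [Finset.sum_congr rfl key, ← Finset.sum_mul, vandermonde hr d h z]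
    rw [NB_eq (by positivity)]
    ring

end NBlem







section E
variable {p : ℝ}

lemma NB_conv' (hp0 : 0 < p) (hp1 : p < 1) {r : ℝ} (hr : 0 ≤ r) (d z : ℕ) :
    ∑ i ∈ range (z+1), NB r p i * NB (d:ℝ) p (z-i) = NB (r + (d:ℝ)) p z := by
  rcases eq_or_lt_of_le hr with h | h
  · subst h
    rw [Finset.sum_eq_single 0]
    · simp [NB_zero_eq]
    · intro i hi hne; simp [NB_zero_eq, hne]
    · intro h; simp at h
  · exact NB_conv hp0 hp1 h d z

lemma tsum_antidiag (g : ℕ × ℕ → ENNReal) :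
    ∑' q : ℕ × ℕ, g q = ∑' n, ∑ i ∈ range (n+1), g (i, n-i) := by
  rw [← Equiv.tsum_eq (Finset.HasAntidiagonal.sigmaAntidiagonalEquivProd (A := ℕ)) g]
  rw [ENNReal.tsum_sigma']
  congr 1
  funext n
  rw [tsum_fintype]
  simp only [Finset.HasAntidiagonal.sigmaAntidiagonalEquivProd_apply]
  rw [Finset.sum_coe_sort (Finset.HasAntidiagonal.antidiagonal n) (fun q => g q)]
  rw [Finset.Nat.sum_antidiagonal_eq_sum_range_succ_mk (fun q => g q) n]

lemma conv_E (hp0 : 0 < p) (hp1 : p < 1) {r : ℝ} (hr : 0 ≤ r) (d : ℕ) (F : ℕ → ENNReal) :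
    ∑' z, ENNReal.ofReal (NB (r + (d:ℝ)) p z) * F z
      = ∑' i, ∑' j, ENNReal.ofReal (NB r p i) * ENNReal.ofReal (NB (d:ℝ) p j) * F (i+j) := by
  rw [← ENNReal.tsum_prod (f := fun i j => ENNReal.ofReal (NB r p i) * ENNReal.ofReal (NB (d:ℝ) p j) * F (i+j))]
  rw [tsum_antidiag]
  congr 1
  funext n
  have h1 : ∀ i ∈ range (n+1),
      ENNReal.ofReal (NB r p i) * ENNReal.ofReal (NB (d:ℝ) p (n-i)) * F (i + (n-i))
        = ENNReal.ofReal (NB r p i * NB (d:ℝ) p (n-i)) * F n := by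
    intro i hi
    have hi' : i ≤ n := Nat.lt_succ_iff.mp (Finset.mem_range.mp hi)
    rw [Nat.add_sub_cancel' hi', ENNReal.ofReal_mul (NB_nonneg hp0 hp1 hr i)]
  rw [Finset.sum_congr rfl h1, ← Finset.sum_mul]
  rw [← ENNReal.ofReal_sum_of_nonneg (fun i _ => mul_nonneg (NB_nonneg hp0 hp1 hr i)
    (NB_nonneg hp0 hp1 (by positivity) (n-i)))]
  rw [NB_conv' hp0 hp1 hr d n]

lemma SE_nat (hp0 : 0 < p) (hp1 : p < 1) (d : ℕ) :
    ∑' z, ENNReal.ofReal (NB (d:ℝ) p z) = 1 := by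
  induction d with
  | zero =>
      rw [tsum_eq_single 0]
      · simp [NB_zero_eq]
      · intro z hz; simp [NB_zero_eq, hz]
  | succ d ih =>
      have hcast : ((d+1 : ℕ) : ℝ) = (d:ℝ) + (1:ℕ) := by push_cast; ring
      rw [hcast]
      have := conv_E hp0 hp1 (r := (d:ℝ)) (by positivity) 1 (fun _ => 1)
      simp only [mul_one] at this
      rw [this]
      have h1 : ∑' j, ENNReal.ofReal (NB ((1:ℕ):ℝ) p j) = 1 := by
        have hq0 : (0:ℝ) ≤ 1 - p := by linarith
        have hNB1 : ∀ j, NB ((1:ℕ):ℝ) p j = p * (1-p)^j := by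
          intro j
          rw [show ((1:ℕ):ℝ) = (1:ℝ) by norm_num, NB_eq one_pos, coef_one, Real.rpow_one]
          ring
        simp only [hNB1]
        have : ∀ j : ℕ, ENNReal.ofReal (p * (1-p)^j)
            = ENNReal.ofReal p * (ENNReal.ofReal (1-p))^j := by
          intro j
          rw [ENNReal.ofReal_mul hp0.le, ENNReal.ofReal_pow hq0]
        simp only [this]
        rw [ENNReal.tsum_mul_left, ENNReal.tsum_geometric]
        have h2 : (1 : ENNReal) - ENNReal.ofReal (1-p) = ENNReal.ofReal p := by
          rw [← ENNReal.ofReal_one, ← ENNReal.ofReal_sub _ hq0]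
          norm_num
        rw [h2]
        exact ENNReal.mul_inv_cancel (by simpa using hp0) ENNReal.ofReal_ne_top
      calc ∑' i, ∑' j, ENNReal.ofReal (NB (d:ℝ) p i) * ENNReal.ofReal (NB ((1:ℕ):ℝ) p j)
          = ∑' i, ENNReal.ofReal (NB (d:ℝ) p i) * ∑' j, ENNReal.ofReal (NB ((1:ℕ):ℝ) p j) := by
            congr 1; funext i; rw [ENNReal.tsum_mul_left]
        _ = 1 := by rw [h1]; simpa using ih

lemma SE_shift (hp0 : 0 < p) (hp1 : p < 1) {r : ℝ} (hr : 0 ≤ r) (d : ℕ) :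
    ∑' z, ENNReal.ofReal (NB (r + (d:ℝ)) p z) = ∑' z, ENNReal.ofReal (NB r p z) := by
  have := conv_E hp0 hp1 hr d (fun _ => 1)
  simp only [mul_one] at this
  rw [this]
  calc ∑' i, ∑' j, ENNReal.ofReal (NB r p i) * ENNReal.ofReal (NB (d:ℝ) p j)
      = ∑' i, ENNReal.ofReal (NB r p i) * ∑' j, ENNReal.ofReal (NB (d:ℝ) p j) := by
        congr 1; funext i; rw [ENNReal.tsum_mul_left]
    _ = ∑' i, ENNReal.ofReal (NB r p i) := by rw [SE_nat hp0 hp1 d]; simp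

lemma tsum_NB_nat (hp0 : 0 < p) (hp1 : p < 1) (d : ℕ) : ∑' z, NB (d:ℝ) p z = 1 := by
  have h := SE_nat hp0 hp1 d
  rw [← ENNReal.ofReal_tsum_of_nonneg (NB_nonneg hp0 hp1 (by positivity))
    (summable_NB hp0 hp1 (by positivity))] at h
  have h2 : (1 : ENNReal) = ENNReal.ofReal 1 := by norm_num
  rw [h2, ENNReal.ofReal_eq_ofReal_iff (tsum_nonneg fun z => NB_nonneg hp0 hp1 (by positivity) z) one_pos.le] at h
  exact h

lemma tsum_NB_shift (hp0 : 0 < p) (hp1 : p < 1) {r : ℝ} (hr : 0 ≤ r) (d : ℕ) :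
    ∑' z, NB (r + (d:ℝ)) p z = ∑' z, NB r p z := by
  have h := SE_shift hp0 hp1 hr d
  have hrd : (0:ℝ) ≤ r + (d:ℝ) := by positivity
  rw [← ENNReal.ofReal_tsum_of_nonneg (NB_nonneg hp0 hp1 hrd) (summable_NB hp0 hp1 hrd),
    ← ENNReal.ofReal_tsum_of_nonneg (NB_nonneg hp0 hp1 hr) (summable_NB hp0 hp1 hr),
    ENNReal.ofReal_eq_ofReal_iff (tsum_nonneg fun z => NB_nonneg hp0 hp1 hrd z)
      (tsum_nonneg fun z => NB_nonneg hp0 hp1 hr z)] at h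
  exact h

end E







/-- CDF of `NB r p` at integer `a` (sum over `z ≤ a`). -/
noncomputable def Fcdf (r p : ℝ) (a : ℤ) : ℝ :=
  ∑ z ∈ range ((a+1).toNat), NB r p z

section M4
variable {p : ℝ}

lemma Fcdf_nonneg (hp0 : 0 < p) (hp1 : p < 1) {r : ℝ} (hr : 0 ≤ r) (a : ℤ) :
    0 ≤ Fcdf r p a :=
  Finset.sum_nonneg fun z _ => NB_nonneg hp0 hp1 hr z

lemma Fcdf_anti (hp0 : 0 < p) (hp1 : p < 1) {r : ℝ} (hr : 0 ≤ r) (d : ℕ) (a : ℤ) :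
    Fcdf (r + (d:ℝ)) p a ≤ Fcdf r p a := by
  unfold Fcdf
  generalize (a+1).toNat = n
  rcases Nat.eq_zero_or_pos n with h | h
  · simp [h]
  · obtain ⟨m, rfl⟩ : ∃ m, n = m + 1 := ⟨n - 1, by omega⟩
    calc ∑ z ∈ range (m+1), NB (r + (d:ℝ)) p z
        = ∑ z ∈ range (m+1), ∑ i ∈ range (z+1), NB r p i * NB (d:ℝ) p (z-i) := by
          refine Finset.sum_congr rfl fun z _ => (NB_conv' hp0 hp1 hr d z).symm
      _ = ∑ i ∈ range (m+1), ∑ j ∈ range (m - i + 1), NB r p i * NB (d:ℝ) p j :=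
          sum_swap_tri (fun i j => NB r p i * NB (d:ℝ) p j) m
      _ ≤ ∑ i ∈ range (m+1), NB r p i := by
          refine Finset.sum_le_sum fun i _ => ?_
          rw [← Finset.mul_sum]
          have h1 : ∑ j ∈ range (m - i + 1), NB (d:ℝ) p j ≤ 1 := by
            rw [← tsum_NB_nat hp0 hp1 d]
            exact Summable.sum_le_tsum _ (fun j _ => NB_nonneg hp0 hp1 (by positivity) j)
              (summable_NB hp0 hp1 (by positivity))
          have h2 := NB_nonneg hp0 hp1 hr i
          nlinarith

lemma coef_shift {r : ℝ} (hr : 0 < r) (n : ℕ) :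
    r * coef (r+1) n = ((n:ℝ) + r) * coef r n := by
  unfold coef
  have h1 : (n:ℝ) + (r + 1) = ((n:ℝ) + r) + 1 := by ring
  rw [h1, Real.Gamma_add_one (by positivity), Real.Gamma_add_one hr.ne']
  have hΓr := (Real.Gamma_pos_of_pos hr).ne'
  have hzf : (Nat.factorial n : ℝ) ≠ 0 := by exact_mod_cast n.factorial_pos.ne'
  field_simp

lemma summable_NB_id (hp0 : 0 < p) (hp1 : p < 1) {r : ℝ} (hr : 0 ≤ r) :
    Summable (fun z : ℕ => NB r p z * (z:ℝ)) := by
  apply (summable_NB_succ hp0 hp1 hr).of_nonneg_of_le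
    (fun z => mul_nonneg (NB_nonneg hp0 hp1 hr z) (Nat.cast_nonneg z))
  intro z
  have := NB_nonneg hp0 hp1 hr z
  nlinarith

lemma moment1 (hp0 : 0 < p) (hp1 : p < 1) {r : ℝ} (hr : 0 < r) :
    ∑' z, NB r p z * (z:ℝ) = r * ((1-p)/p) * ∑' z, NB (r+1) p z := by
  rw [Summable.tsum_eq_zero_add (summable_NB_id hp0 hp1 hr.le)]
  have key : ∀ n : ℕ, NB r p (n+1) * ((n+1:ℕ):ℝ) = r * ((1-p)/p) * NB (r+1) p n := by
    intro n
    have h5 : coef r (n+1) * ((n+1:ℕ):ℝ) = r * coef (r+1) n := by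
      have ha := coef_succ_mul hr n
      have hb := coef_shift hr n
      push_cast
      nlinarith [ha, hb]
    rw [NB_eq hr, NB_eq (by positivity : (0:ℝ) < r+1)]
    have h2 : p ^ (r+1) = p ^ r * p := by rw [Real.rpow_add hp0, Real.rpow_one]
    rw [h2, pow_succ]
    have hpne : p ≠ 0 := hp0.ne'
    have h6 : r * ((1-p)/p) * (coef (r+1) n * (p^r * p) * (1-p)^n)
        = (r * coef (r+1) n) * (p^r * ((1-p)^n * (1-p))) := by
      field_simp
    rw [h6, ← h5]
    push_cast
    ring
  simp only [key]
  rw [tsum_mul_left]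
  simp

end M4






noncomputable def EE (p rz rκ : ℝ) (f : ℕ → ℕ → ℝ) : ℝ :=
  ∑' z, ∑' κ, NB rz p z * NB rκ p κ * f z κ

noncomputable def Q4 (p rz rκ : ℝ) (d e : ℕ) (H : ℕ → ℕ → ℕ → ℕ → ENNReal) : ENNReal :=
  ∑' i, ENNReal.ofReal (NB rz p i) * ∑' j, ENNReal.ofReal (NB (d:ℝ) p j)
    * ∑' i', ENNReal.ofReal (NB rκ p i') * ∑' j', ENNReal.ofReal (NB (e:ℝ) p j') * H i j i' j'

/-- Affine domination of a nonnegative kernel. -/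
def DomA (f : ℕ → ℕ → ℝ) (C0 C1 C2 : ℝ) : Prop :=
  0 ≤ C0 ∧ 0 ≤ C1 ∧ 0 ≤ C2 ∧ ∀ z κ, 0 ≤ f z κ ∧ f z κ ≤ C0 + C1*(z:ℝ) + C2*(κ:ℝ)

section M5
variable {p rz rκ : ℝ} {f g : ℕ → ℕ → ℝ} {C0 C1 C2 : ℝ}

lemma tsum_NB_affine (hp0 : 0 < p) (hp1 : p < 1) {r : ℝ} (hr : 0 ≤ r) (c d : ℝ) :
    ∑' z, NB r p z * (c + d*(z:ℝ))
      = c * (∑' z, NB r p z) + d * (∑' z, NB r p z * (z:ℝ)) := by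
  have h1 : Summable (fun z => NB r p z * c) := (summable_NB hp0 hp1 hr).mul_right c
  have h2 : Summable (fun z => (NB r p z * (z:ℝ)) * d) := (summable_NB_id hp0 hp1 hr).mul_right d
  have he : ∀ z : ℕ, NB r p z * (c + d*(z:ℝ)) = NB r p z * c + (NB r p z * (z:ℝ)) * d :=
    fun z => by ring
  rw [tsum_congr he, Summable.tsum_add h1 h2, tsum_mul_right, tsum_mul_right]
  ring

lemma EE_nonneg (hp0 : 0 < p) (hp1 : p < 1) (hrz : 0 ≤ rz) (hrκ : 0 ≤ rκ)
    (hf : ∀ z κ, 0 ≤ f z κ) : 0 ≤ EE p rz rκ f := by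
  apply tsum_nonneg; intro z
  apply tsum_nonneg; intro κ
  exact mul_nonneg (mul_nonneg (NB_nonneg hp0 hp1 hrz z) (NB_nonneg hp0 hp1 hrκ κ)) (hf z κ)

lemma dom_affine_le {z κ : ℕ} (hC0 : 0 ≤ C0) (hC1 : 0 ≤ C1) (hC2 : 0 ≤ C2) :
    C0 + C1*(z:ℝ) + C2*(κ:ℝ) ≤ (C0 + C1*(z:ℝ) + C2) * ((κ:ℝ)+1) := by
  have hz : (0:ℝ) ≤ (z:ℝ) := Nat.cast_nonneg z
  have hκ : (0:ℝ) ≤ (κ:ℝ) := Nat.cast_nonneg κ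
  nlinarith [mul_nonneg hC0 hκ, mul_nonneg (mul_nonneg hC1 hz) hκ, mul_nonneg hC2 hκ]

lemma summable_inner (hp0 : 0 < p) (hp1 : p < 1) (hrκ : 0 ≤ rκ)
    (hD : DomA f C0 C1 C2) (z : ℕ) : Summable (fun κ => NB rκ p κ * f z κ) := by
  obtain ⟨hC0, hC1, hC2, hf⟩ := hD
  apply summable_NB_mul hp0 hp1 hrκ (C := C0 + C1*(z:ℝ) + C2) (fun κ => (hf z κ).1)
  intro κ
  exact (hf z κ).2.trans (dom_affine_le hC0 hC1 hC2)

lemma tsum_inner_le (hp0 : 0 < p) (hp1 : p < 1) (hrκ : 0 ≤ rκ)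
    (hD : DomA f C0 C1 C2) (z : ℕ) :
    ∑' κ, NB rκ p κ * f z κ
      ≤ (C0 + C1*(z:ℝ)) * (∑' κ, NB rκ p κ) + C2 * (∑' κ, NB rκ p κ * (κ:ℝ)) := by
  obtain ⟨hC0, hC1, hC2, hf⟩ := hD
  have h2 : Summable (fun κ : ℕ => NB rκ p κ * ((C0 + C1*(z:ℝ)) + C2 * (κ:ℝ))) := by
    have h1 : Summable (fun κ => NB rκ p κ * (C0 + C1*(z:ℝ))) :=
      (summable_NB hp0 hp1 hrκ).mul_right _
    have h2 : Summable (fun κ : ℕ => (NB rκ p κ * (κ:ℝ)) * C2) :=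
      (summable_NB_id hp0 hp1 hrκ).mul_right C2
    exact ((h1.add h2).congr (fun κ => by ring)).of_nonneg_of_le
      (fun κ => mul_nonneg (NB_nonneg hp0 hp1 hrκ κ) (by
        have hz : (0:ℝ) ≤ (z:ℝ) := Nat.cast_nonneg z
        have hκ : (0:ℝ) ≤ (κ:ℝ) := Nat.cast_nonneg κ
        nlinarith [mul_nonneg hC2 hκ, mul_nonneg hC1 hz]))
      (fun κ => le_refl _) |>.congr (fun κ => rfl)
  have step : ∑' κ, NB rκ p κ * f z κ ≤ ∑' κ, NB rκ p κ * ((C0 + C1*(z:ℝ)) + C2 * (κ:ℝ)) := by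
    apply Summable.tsum_le_tsum _ (summable_inner hp0 hp1 hrκ ⟨hC0, hC1, hC2, hf⟩ z) h2
    intro κ
    apply mul_le_mul_of_nonneg_left _ (NB_nonneg hp0 hp1 hrκ κ)
    have := (hf z κ).2; linarith
  calc ∑' κ, NB rκ p κ * f z κ ≤ _ := step
    _ = _ := tsum_NB_affine hp0 hp1 hrκ (C0 + C1*(z:ℝ)) C2

lemma inner_nonneg (hp0 : 0 < p) (hp1 : p < 1) (hrκ : 0 ≤ rκ)
    (hf : ∀ z κ, 0 ≤ f z κ) (z : ℕ) :
    0 ≤ ∑' κ, NB rκ p κ * f z κ :=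
  tsum_nonneg fun κ => mul_nonneg (NB_nonneg hp0 hp1 hrκ κ) (hf z κ)

lemma summable_outer (hp0 : 0 < p) (hp1 : p < 1) (hrz : 0 ≤ rz) (hrκ : 0 ≤ rκ)
    (hD : DomA f C0 C1 C2) :
    Summable (fun z => NB rz p z * ∑' κ, NB rκ p κ * f z κ) := by
  obtain ⟨hC0, hC1, hC2, hf⟩ := hD
  have hSκ0 : 0 ≤ ∑' κ, NB rκ p κ := tsum_nonneg fun κ => NB_nonneg hp0 hp1 hrκ κ
  have hEκ0 : 0 ≤ ∑' κ, NB rκ p κ * (κ:ℝ) :=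
    tsum_nonneg fun κ => mul_nonneg (NB_nonneg hp0 hp1 hrκ κ) (Nat.cast_nonneg κ)
  apply summable_NB_mul hp0 hp1 hrz
    (C := C0*(∑' κ, NB rκ p κ) + C2*(∑' κ, NB rκ p κ * (κ:ℝ)) + C1*(∑' κ, NB rκ p κ))
    (inner_nonneg hp0 hp1 hrκ (fun z κ => (hf z κ).1))
  intro z
  have h1 := tsum_inner_le hp0 hp1 hrκ ⟨hC0, hC1, hC2, hf⟩ z
  have hz : (0:ℝ) ≤ (z:ℝ) := Nat.cast_nonneg z
  nlinarith [mul_nonneg hC0 hSκ0, mul_nonneg hC2 hEκ0, mul_nonneg (mul_nonneg hC1 hz) hSκ0]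

lemma EE_eq_nested (hD : DomA f C0 C1 C2) :
    EE p rz rκ f = ∑' z, NB rz p z * ∑' κ, NB rκ p κ * f z κ := by
  unfold EE
  refine tsum_congr fun z => ?_
  rw [← tsum_mul_left]
  exact tsum_congr fun κ => by ring

lemma EE_le (hp0 : 0 < p) (hp1 : p < 1) (hrz : 0 ≤ rz) (hrκ : 0 ≤ rκ)
    (hD : DomA f C0 C1 C2) :
    EE p rz rκ f ≤ C0 * (∑' z, NB rz p z) * (∑' κ, NB rκ p κ)
      + C1 * (∑' z, NB rz p z * (z:ℝ)) * (∑' κ, NB rκ p κ)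
      + C2 * (∑' z, NB rz p z) * (∑' κ, NB rκ p κ * (κ:ℝ)) := by
  obtain ⟨hC0, hC1, hC2, hf⟩ := hD
  rw [EE_eq_nested ⟨hC0, hC1, hC2, hf⟩]
  set Sκ := ∑' κ, NB rκ p κ with hSκdef
  set Eκ := ∑' κ, NB rκ p κ * (κ:ℝ) with hEκdef
  have h2 : Summable (fun z : ℕ => NB rz p z * ((C0*Sκ + C2*Eκ) + (C1*Sκ)*(z:ℝ))) := by
    have ha : Summable (fun z => NB rz p z * (C0*Sκ + C2*Eκ)) :=
      (summable_NB hp0 hp1 hrz).mul_right _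
    have hb : Summable (fun z : ℕ => (NB rz p z * (z:ℝ)) * (C1*Sκ)) :=
      (summable_NB_id hp0 hp1 hrz).mul_right _
    exact (ha.add hb).congr (fun z => by ring)
  have step : ∑' z, NB rz p z * ∑' κ, NB rκ p κ * f z κ
      ≤ ∑' z, NB rz p z * ((C0*Sκ + C2*Eκ) + (C1*Sκ)*(z:ℝ)) := by
    apply Summable.tsum_le_tsum _ (summable_outer hp0 hp1 hrz hrκ ⟨hC0, hC1, hC2, hf⟩) h2
    intro z
    apply mul_le_mul_of_nonneg_left _ (NB_nonneg hp0 hp1 hrz z)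
    have := tsum_inner_le hp0 hp1 hrκ (⟨hC0, hC1, hC2, hf⟩ : DomA f C0 C1 C2) z
    rw [← hSκdef, ← hEκdef] at this
    calc ∑' κ, NB rκ p κ * f z κ ≤ (C0 + C1*(z:ℝ)) * Sκ + C2 * Eκ := this
      _ = (C0*Sκ + C2*Eκ) + (C1*Sκ)*(z:ℝ) := by ring
  calc ∑' z, NB rz p z * ∑' κ, NB rκ p κ * f z κ ≤ _ := step
    _ = (C0*Sκ + C2*Eκ) * (∑' z, NB rz p z) + (C1*Sκ) * (∑' z, NB rz p z * (z:ℝ)) :=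
        tsum_NB_affine hp0 hp1 hrz _ _
    _ = C0 * (∑' z, NB rz p z) * Sκ + C1 * (∑' z, NB rz p z * (z:ℝ)) * Sκ
          + C2 * (∑' z, NB rz p z) * Eκ := by ring

lemma EE_bridge (hp0 : 0 < p) (hp1 : p < 1) (hrz : 0 ≤ rz) (hrκ : 0 ≤ rκ)
    (hD : DomA f C0 C1 C2) :
    ENNReal.ofReal (EE p rz rκ f)
      = ∑' z, ENNReal.ofReal (NB rz p z)
          * ∑' κ, ENNReal.ofReal (NB rκ p κ) * ENNReal.ofReal (f z κ) := by
  obtain ⟨hC0, hC1, hC2, hf⟩ := hD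
  rw [EE_eq_nested ⟨hC0, hC1, hC2, hf⟩]
  rw [ENNReal.ofReal_tsum_of_nonneg
    (fun z => mul_nonneg (NB_nonneg hp0 hp1 hrz z)
      (inner_nonneg hp0 hp1 hrκ (fun z κ => (hf z κ).1) z))
    (summable_outer hp0 hp1 hrz hrκ ⟨hC0, hC1, hC2, hf⟩)]
  refine tsum_congr fun z => ?_
  rw [ENNReal.ofReal_mul (NB_nonneg hp0 hp1 hrz z)]
  congr 1
  rw [ENNReal.ofReal_tsum_of_nonneg
    (fun κ => mul_nonneg (NB_nonneg hp0 hp1 hrκ κ) ((hf z κ).1))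
    (summable_inner hp0 hp1 hrκ ⟨hC0, hC1, hC2, hf⟩ z)]
  exact tsum_congr fun κ => ENNReal.ofReal_mul (NB_nonneg hp0 hp1 hrκ κ)

end M5












section M5b
variable {p rz rκ : ℝ} {d e : ℕ} {f g f' g' : ℕ → ℕ → ℝ} {C0 C1 C2 : ℝ}

lemma Q4_mono {H1 H2 : ℕ → ℕ → ℕ → ℕ → ENNReal} (h : ∀ i j i' j', H1 i j i' j' ≤ H2 i j i' j') :
    Q4 p rz rκ d e H1 ≤ Q4 p rz rκ d e H2 := by
  unfold Q4
  refine ENNReal.tsum_le_tsum fun i => mul_le_mul_right ?_ _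
  refine ENNReal.tsum_le_tsum fun j => mul_le_mul_right ?_ _
  refine ENNReal.tsum_le_tsum fun i' => mul_le_mul_right ?_ _
  exact ENNReal.tsum_le_tsum fun j' => mul_le_mul_right (h i j i' j') _

lemma Q4_add (H1 H2 : ℕ → ℕ → ℕ → ℕ → ENNReal) :
    Q4 p rz rκ d e (fun i j i' j' => H1 i j i' j' + H2 i j i' j')
      = Q4 p rz rκ d e H1 + Q4 p rz rκ d e H2 := by
  unfold Q4
  simp only [mul_add, ENNReal.tsum_add]

/-- Convert a bridged double sum with shifted shapes into a `Q4`. -/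
lemma bridged_to_Q4_conv (hp0 : 0 < p) (hp1 : p < 1) (hrz : 0 ≤ rz) (hrκ : 0 ≤ rκ)
    (F : ℕ → ℕ → ℝ) :
    ∑' z, ENNReal.ofReal (NB (rz + (d:ℝ)) p z)
        * ∑' κ, ENNReal.ofReal (NB (rκ + (e:ℝ)) p κ) * ENNReal.ofReal (F z κ)
      = Q4 p rz rκ d e (fun i j i' j' => ENNReal.ofReal (F (i+j) (i'+j'))) := by
  have hz := conv_E hp0 hp1 hrz d
    (fun z => ∑' κ, ENNReal.ofReal (NB (rκ + (e:ℝ)) p κ) * ENNReal.ofReal (F z κ))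
  rw [hz]
  have hκ : ∀ z : ℕ, (∑' κ, ENNReal.ofReal (NB (rκ + (e:ℝ)) p κ) * ENNReal.ofReal (F z κ))
      = ∑' i', ∑' j', ENNReal.ofReal (NB rκ p i') * ENNReal.ofReal (NB (e:ℝ) p j')
          * ENNReal.ofReal (F z (i'+j')) :=
    fun z => conv_E hp0 hp1 hrκ e _
  simp only [hκ]
  unfold Q4
  simp only [mul_assoc, ENNReal.tsum_mul_left]

lemma bridged_to_Q4_pad (hp0 : 0 < p) (hp1 : p < 1) (hrz : 0 ≤ rz) (hrκ : 0 ≤ rκ)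
    (F : ℕ → ℕ → ℝ) :
    ∑' z, ENNReal.ofReal (NB rz p z)
        * ∑' κ, ENNReal.ofReal (NB rκ p κ) * ENNReal.ofReal (F z κ)
      = Q4 p rz rκ d e (fun i j i' j' => ENNReal.ofReal (F i i')) := by
  symm
  unfold Q4
  refine tsum_congr fun i => ?_
  congr 1
  have h1 : ∀ K : ENNReal, (∑' j' : ℕ, ENNReal.ofReal (NB (e:ℝ) p j') * K) = K := by
    intro K; rw [ENNReal.tsum_mul_right, SE_nat hp0 hp1 e, one_mul]
  have h2 : (∑' i', ENNReal.ofReal (NB rκ p i')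
      * ∑' j' : ℕ, ENNReal.ofReal (NB (e:ℝ) p j') * ENNReal.ofReal (F i i'))
      = ∑' i', ENNReal.ofReal (NB rκ p i') * ENNReal.ofReal (F i i') :=
    tsum_congr fun i' => by rw [h1]
  calc ∑' j, ENNReal.ofReal (NB (d:ℝ) p j) * ∑' i', ENNReal.ofReal (NB rκ p i')
        * ∑' j' : ℕ, ENNReal.ofReal (NB (e:ℝ) p j') * ENNReal.ofReal (F i i')
      = ∑' j, ENNReal.ofReal (NB (d:ℝ) p j)
          * ∑' i', ENNReal.ofReal (NB rκ p i') * ENNReal.ofReal (F i i') := by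
        refine tsum_congr fun j => by rw [h2]
    _ = (∑' j, ENNReal.ofReal (NB (d:ℝ) p j))
          * (∑' i', ENNReal.ofReal (NB rκ p i') * ENNReal.ofReal (F i i')) :=
        ENNReal.tsum_mul_right
    _ = ∑' i', ENNReal.ofReal (NB rκ p i') * ENNReal.ofReal (F i i') := by
        rw [SE_nat hp0 hp1 d, one_mul]

theorem EE_submod (hp0 : 0 < p) (hp1 : p < 1) (hrz : 0 ≤ rz) (hrκ : 0 ≤ rκ)
    (hDf : DomA f C0 C1 C2) (hDg : DomA g C0 C1 C2)
    (hDf' : DomA f' C0 C1 C2) (hDg' : DomA g' C0 C1 C2)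
    (hpoint : ∀ i j i' j', f' (i+j) (i'+j') + g i i' ≤ g' (i+j) (i'+j') + f i i') :
    EE p (rz + (d:ℝ)) (rκ + (e:ℝ)) f' + EE p rz rκ g
      ≤ EE p (rz + (d:ℝ)) (rκ + (e:ℝ)) g' + EE p rz rκ f := by
  have hrzd : (0:ℝ) ≤ rz + (d:ℝ) := by positivity
  have hrκe : (0:ℝ) ≤ rκ + (e:ℝ) := by positivity
  have hf0 := fun z κ => (hDf.2.2.2 z κ).1
  have hg0 := fun z κ => (hDg.2.2.2 z κ).1
  have hf'0 := fun z κ => (hDf'.2.2.2 z κ).1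
  have hg'0 := fun z κ => (hDg'.2.2.2 z κ).1
  rw [← ENNReal.ofReal_le_ofReal_iff (by
    have := EE_nonneg hp0 hp1 hrzd hrκe hg'0
    have := EE_nonneg hp0 hp1 hrz hrκ hf0
    linarith)]
  rw [ENNReal.ofReal_add (EE_nonneg hp0 hp1 hrzd hrκe hf'0) (EE_nonneg hp0 hp1 hrz hrκ hg0),
      ENNReal.ofReal_add (EE_nonneg hp0 hp1 hrzd hrκe hg'0) (EE_nonneg hp0 hp1 hrz hrκ hf0)]
  rw [EE_bridge hp0 hp1 hrzd hrκe hDf', EE_bridge hp0 hp1 hrz hrκ hDg,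
      EE_bridge hp0 hp1 hrzd hrκe hDg', EE_bridge hp0 hp1 hrz hrκ hDf]
  rw [bridged_to_Q4_conv hp0 hp1 hrz hrκ f', bridged_to_Q4_conv hp0 hp1 hrz hrκ g',
      bridged_to_Q4_pad hp0 hp1 hrz hrκ (d := d) (e := e) g,
      bridged_to_Q4_pad hp0 hp1 hrz hrκ (d := d) (e := e) f]
  rw [← Q4_add, ← Q4_add]
  apply Q4_mono
  intro i j i' j'
  rw [← ENNReal.ofReal_add (hf'0 _ _) (hg0 _ _), ← ENNReal.ofReal_add (hg'0 _ _) (hf0 _ _)]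
  exact ENNReal.ofReal_le_ofReal (hpoint i j i' j')

theorem EE_pair_mono (hp0 : 0 < p) (hp1 : p < 1) (hrz : 0 ≤ rz) (hrκ : 0 ≤ rκ)
    (hDf : DomA f C0 C1 C2) (hDg : DomA g C0 C1 C2)
    (hDf' : DomA f' C0 C1 C2) (hDg' : DomA g' C0 C1 C2)
    (hpoint : ∀ z κ, f z κ + g z κ ≤ f' z κ + g' z κ) :
    EE p rz rκ f + EE p rz rκ g ≤ EE p rz rκ f' + EE p rz rκ g' := by
  have hf0 := fun z κ => (hDf.2.2.2 z κ).1
  have hg0 := fun z κ => (hDg.2.2.2 z κ).1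
  have hf'0 := fun z κ => (hDf'.2.2.2 z κ).1
  have hg'0 := fun z κ => (hDg'.2.2.2 z κ).1
  rw [← ENNReal.ofReal_le_ofReal_iff (by
    have := EE_nonneg hp0 hp1 hrz hrκ hf'0
    have := EE_nonneg hp0 hp1 hrz hrκ hg'0
    linarith)]
  rw [ENNReal.ofReal_add (EE_nonneg hp0 hp1 hrz hrκ hf0) (EE_nonneg hp0 hp1 hrz hrκ hg0),
      ENNReal.ofReal_add (EE_nonneg hp0 hp1 hrz hrκ hf'0) (EE_nonneg hp0 hp1 hrz hrκ hg'0)]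
  rw [EE_bridge hp0 hp1 hrz hrκ hDf, EE_bridge hp0 hp1 hrz hrκ hDg,
      EE_bridge hp0 hp1 hrz hrκ hDf', EE_bridge hp0 hp1 hrz hrκ hDg']
  have hmerge : ∀ (u v : ℕ → ℕ → ℝ), (∀ z κ, 0 ≤ u z κ) → (∀ z κ, 0 ≤ v z κ) →
      (∑' z, ENNReal.ofReal (NB rz p z) * ∑' κ, ENNReal.ofReal (NB rκ p κ) * ENNReal.ofReal (u z κ))
      + (∑' z, ENNReal.ofReal (NB rz p z) * ∑' κ, ENNReal.ofReal (NB rκ p κ) * ENNReal.ofReal (v z κ))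
      = ∑' z, ENNReal.ofReal (NB rz p z)
          * ∑' κ, ENNReal.ofReal (NB rκ p κ) * ENNReal.ofReal (u z κ + v z κ) := by
    intro u v hu hv
    rw [← ENNReal.tsum_add]
    refine tsum_congr fun z => ?_
    rw [← mul_add, ← ENNReal.tsum_add]
    congr 1
    refine tsum_congr fun κ => ?_
    rw [← mul_add, ENNReal.ofReal_add (hu z κ) (hv z κ)]
  rw [hmerge f g hf0 hg0, hmerge f' g' hf'0 hg'0]
  refine ENNReal.tsum_le_tsum fun z => mul_le_mul_right ?_ _
  refine ENNReal.tsum_le_tsum fun κ => mul_le_mul_right ?_ _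
  exact ENNReal.ofReal_le_ofReal (hpoint z κ)

end M5b

end Aux

/-- `p_t = (β0 + N·t)/(β0 + N·t + 1)`. -/
noncomputable def pt (β0 : ℝ) (N t : ℕ) : ℝ :=
  (β0 + (N : ℝ) * (t : ℝ)) / (β0 + (N : ℝ) * (t : ℝ) + 1)

/-- Expectation `E_{(Z,K)}[f(Z,K)]` with `Z ~ NB(α0+k, p_t)` and
`K ~ NB((N−1)(α0+k), p_t)` independent. -/
noncomputable def EZK (α0 β0 : ℝ) (N t k : ℕ) (f : ℕ → ℕ → ℝ) : ℝ :=
  ∑' z : ℕ, ∑' κ : ℕ,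
    NB (α0 + (k : ℝ)) (pt β0 N t) z * NB (((N : ℝ) - 1) * (α0 + (k : ℝ))) (pt β0 N t) κ * f z κ

/-- One-period cost plus cost-to-go of ordering up to level `a` at stage `(t,k)`. -/
noncomputable def G (α0 β0 : ℝ) (N : ℕ) (cv ch cb : ℝ) (W : ℕ → ℤ → ℕ → ℝ)
    (t : ℕ) (a : ℤ) (k : ℕ) : ℝ :=
  cv * (a : ℝ)
    + ch * ∑' z : ℕ, NB (α0 + (k : ℝ)) (pt β0 N t) z * max ((a : ℝ) - (z : ℝ)) 0
    + cb * ∑' z : ℕ, NB (α0 + (k : ℝ)) (pt β0 N t) z * max ((z : ℝ) - (a : ℝ)) 0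
    + EZK α0 β0 N t k (fun z κ => W (t + 1) (a - (z : ℤ)) (k + z + κ))


section Aux2
open Finset

















/-- Discrete convexity of `V` in the inventory variable. -/
def CvxV (V : ℤ → ℕ → ℝ) : Prop := ∀ x k, V (x+1) k + V (x+1) k ≤ V x k + V (x+2) k

/-- Submodularity (decreasing differences) of `V` in `(x,k)`. -/
def SubV (V : ℤ → ℕ → ℝ) : Prop :=
  ∀ (x : ℤ) (k k' : ℕ), k ≤ k' → V (x+1) k' + V x k ≤ V x k' + V (x+1) k

/-- Nonnegativity and affine growth of `V`. -/
def GrowV (V : ℤ → ℕ → ℝ) (A : ℝ) : Prop :=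
  0 ≤ A ∧ ∀ x k, 0 ≤ V x k ∧ V x k ≤ A * (1 + |(x:ℝ)| + (k:ℝ))

section Stage

variable {α0 β0 : ℝ} {N T : ℕ} {cv ch cb : ℝ} {W : ℕ → ℤ → ℕ → ℝ} {t : ℕ} {A : ℝ}

lemma pt_pos (hβ0 : 0 < β0) : 0 < pt β0 N t := by
  unfold pt
  have h1 : (0:ℝ) < β0 + (N:ℝ)*(t:ℝ) := by positivity
  positivity

lemma pt_lt_one (hβ0 : 0 < β0) : pt β0 N t < 1 := by
  unfold pt
  have h1 : (0:ℝ) < β0 + (N:ℝ)*(t:ℝ) + 1 := by positivity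
  rw [div_lt_one h1]
  linarith

lemma rz_shift {k k' : ℕ} (hkk : k ≤ k') :
    α0 + (k':ℝ) = (α0 + (k:ℝ)) + ((k' - k : ℕ):ℝ) := by
  have : ((k' - k : ℕ):ℝ) = (k':ℝ) - (k:ℝ) := by
    push_cast [Nat.cast_sub hkk]; ring
  rw [this]; ring

lemma rκ_shift (hN : 1 ≤ N) {k k' : ℕ} (hkk : k ≤ k') :
    ((N:ℝ) - 1) * (α0 + (k':ℝ))
      = ((N:ℝ) - 1) * (α0 + (k:ℝ)) + (((N-1) * (k' - k) : ℕ):ℝ) := by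
  have h1 : ((k' - k : ℕ):ℝ) = (k':ℝ) - (k:ℝ) := by
    push_cast [Nat.cast_sub hkk]; ring
  have h2 : ((N - 1 : ℕ):ℝ) = (N:ℝ) - 1 := by
    push_cast [Nat.cast_sub hN]; ring
  push_cast
  rw [h2, h1]
  ring

lemma hrz_pos (hα0 : 0 < α0) (k : ℕ) : (0:ℝ) < α0 + (k:ℝ) := by positivity

lemma hrκ_nonneg (hα0 : 0 < α0) (hN : 1 ≤ N) (k : ℕ) :
    (0:ℝ) ≤ ((N:ℝ) - 1) * (α0 + (k:ℝ)) := by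
  have h2 : (1:ℝ) ≤ (N:ℝ) := by exact_mod_cast hN
  have := hrz_pos (α0 := α0) hα0 k
  nlinarith

/-- `T1`-type term. -/
noncomputable def T1 (p r : ℝ) (a : ℤ) : ℝ := ∑' z : ℕ, NB r p z * max ((a:ℝ) - (z:ℝ)) 0

noncomputable def T2 (p r : ℝ) (a : ℤ) : ℝ := ∑' z : ℕ, NB r p z * max ((z:ℝ) - (a:ℝ)) 0

lemma G_eq (a : ℤ) (k : ℕ) :
    G α0 β0 N cv ch cb W t a k
      = cv * (a:ℝ) + ch * T1 (pt β0 N t) (α0 + (k:ℝ)) a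
        + cb * T2 (pt β0 N t) (α0 + (k:ℝ)) a
        + EE (pt β0 N t) (α0 + (k:ℝ)) (((N:ℝ) - 1) * (α0 + (k:ℝ)))
            (fun z κ => W (t+1) (a - (z:ℤ)) (k + z + κ)) := rfl

section Tlem
variable {p r : ℝ} (hp0 : 0 < p) (hp1 : p < 1) (hr : 0 ≤ r)
include hp0 hp1 hr

lemma summable_T1 (a : ℤ) : Summable (fun z : ℕ => NB r p z * max ((a:ℝ) - (z:ℝ)) 0) := by
  apply summable_NB_mul hp0 hp1 hr (C := |(a:ℝ)|) (fun z => le_max_right _ _)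
  intro z
  have h1 : (a:ℝ) - z ≤ |(a:ℝ)| := by
    have := le_abs_self (a:ℝ)
    have : (0:ℝ) ≤ (z:ℝ) := Nat.cast_nonneg z
    have := le_abs_self (a:ℝ); linarith
  have h2 : (0:ℝ) ≤ |(a:ℝ)| := abs_nonneg _
  have h3 : (0:ℝ) ≤ (z:ℝ) := Nat.cast_nonneg z
  rw [max_le_iff]
  constructor <;> nlinarith

lemma summable_T2 (a : ℤ) : Summable (fun z : ℕ => NB r p z * max ((z:ℝ) - (a:ℝ)) 0) := by
  apply summable_NB_mul hp0 hp1 hr (C := |(a:ℝ)| + 1) (fun z => le_max_right _ _)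
  intro z
  have h1 : -(a:ℝ) ≤ |(a:ℝ)| := neg_le_abs _
  have h2 : (0:ℝ) ≤ |(a:ℝ)| := abs_nonneg _
  have h3 : (0:ℝ) ≤ (z:ℝ) := Nat.cast_nonneg z
  rw [max_le_iff]
  constructor <;> nlinarith

lemma summable_ind (a : ℤ) :
    Summable (fun z : ℕ => NB r p z * (if (z:ℤ) ≤ a then (1:ℝ) else 0)) := by
  apply summable_NB_mul hp0 hp1 hr (C := 1)
    (fun z => by split <;> norm_num)
  intro z
  have h3 : (0:ℝ) ≤ (z:ℝ) := Nat.cast_nonneg z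
  split <;> [skip; skip] <;> nlinarith

omit hp0 hp1 hr in
lemma tsum_ind_eq (a : ℤ) :
    ∑' z : ℕ, NB r p z * (if (z:ℤ) ≤ a then (1:ℝ) else 0) = Fcdf r p a := by
  rw [tsum_eq_sum (s := range ((a+1).toNat)) ?_]
  · refine Finset.sum_congr rfl fun z hz => ?_
    have h1 : z < (a+1).toNat := Finset.mem_range.mp hz
    have h2 : (z:ℤ) < a + 1 := Int.lt_toNat.mp h1
    rw [if_pos (by omega), mul_one]
  · intro z hz
    have h1 : (a+1).toNat ≤ z := by
      by_contra h
      exact hz (Finset.mem_range.mpr (by omega))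
    have h2 : a + 1 ≤ (z:ℤ) := Int.toNat_le.mp h1
    rw [if_neg (by omega), mul_zero]

omit hp0 hp1 hr in
lemma max_split1 (a : ℤ) (z : ℕ) :
    max ((a:ℝ) + 1 - (z:ℝ)) 0 = max ((a:ℝ) - (z:ℝ)) 0 + (if (z:ℤ) ≤ a then (1:ℝ) else 0) := by
  rcases le_or_gt ((z:ℤ)) a with h | h
  · have hz : (z:ℝ) ≤ (a:ℝ) := by exact_mod_cast h
    rw [if_pos h, max_eq_left (by linarith), max_eq_left (by linarith)]
    ring
  · have hz : (a:ℝ) + 1 ≤ (z:ℝ) := by exact_mod_cast h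
    rw [if_neg (by omega), max_eq_right (by linarith), max_eq_right (by linarith)]
    ring

omit hp0 hp1 hr in
lemma max_split2 (a : ℤ) (z : ℕ) :
    max ((z:ℝ) - (a:ℝ)) 0
      = max ((z:ℝ) - ((a:ℝ)+1)) 0 + (1 - (if (z:ℤ) ≤ a then (1:ℝ) else 0)) := by
  rcases le_or_gt ((z:ℤ)) a with h | h
  · have hz : (z:ℝ) ≤ (a:ℝ) := by exact_mod_cast h
    rw [if_pos h, max_eq_right (by linarith), max_eq_right (by linarith)]
    ring
  · have hz : (a:ℝ) + 1 ≤ (z:ℝ) := by exact_mod_cast h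
    rw [if_neg (by omega), max_eq_left (by linarith), max_eq_left (by linarith)]
    ring

lemma T1_split (a : ℤ) : T1 p r (a+1) = T1 p r a + Fcdf r p a := by
  unfold T1
  have hcast : ∀ z : ℕ, (((a+1 : ℤ)):ℝ) - (z:ℝ) = (a:ℝ) + 1 - (z:ℝ) := by
    intro z; push_cast; ring
  calc ∑' z : ℕ, NB r p z * max (((a+1 : ℤ):ℝ) - (z:ℝ)) 0
      = ∑' z : ℕ, (NB r p z * max ((a:ℝ) - (z:ℝ)) 0
          + NB r p z * (if (z:ℤ) ≤ a then (1:ℝ) else 0)) := by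
        refine tsum_congr fun z => ?_
        rw [hcast z, max_split1]
        ring
    _ = _ := by
        rw [Summable.tsum_add (summable_T1 hp0 hp1 hr a) (summable_ind hp0 hp1 hr a),
          tsum_ind_eq a]

lemma T2_split (a : ℤ) :
    T2 p r a = T2 p r (a+1) + ((∑' z, NB r p z) - Fcdf r p a) := by
  unfold T2
  have hcast : ∀ z : ℕ, (z:ℝ) - ((a+1 : ℤ):ℝ) = (z:ℝ) - ((a:ℝ)+1) := by
    intro z; push_cast; ring
  have hsub : Summable (fun z : ℕ => NB r p z * (1 - (if (z:ℤ) ≤ a then (1:ℝ) else 0))) := by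
    have := (summable_NB hp0 hp1 hr).sub (summable_ind hp0 hp1 hr a)
    exact this.congr fun z => by ring
  calc ∑' z : ℕ, NB r p z * max ((z:ℝ) - ((a : ℤ):ℝ)) 0
      = ∑' z : ℕ, (NB r p z * max ((z:ℝ) - ((a:ℝ)+1)) 0
          + NB r p z * (1 - (if (z:ℤ) ≤ a then (1:ℝ) else 0))) := by
        refine tsum_congr fun z => ?_
        push_cast
        rw [max_split2 a z]
        ring
    _ = (∑' z : ℕ, NB r p z * max ((z:ℝ) - ((a:ℝ)+1)) 0)
          + ((∑' z, NB r p z) - Fcdf r p a) := by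
        have hT2' : Summable (fun z : ℕ => NB r p z * max ((z:ℝ) - ((a:ℝ)+1)) 0) := by
          have := summable_T2 hp0 hp1 hr (a+1)
          exact this.congr fun z => by rw [hcast z]
        rw [Summable.tsum_add hT2' hsub]
        congr 1
        have : ∀ z : ℕ, NB r p z * (1 - (if (z:ℤ) ≤ a then (1:ℝ) else 0))
            = NB r p z - NB r p z * (if (z:ℤ) ≤ a then (1:ℝ) else 0) := fun z => by ring
        rw [tsum_congr this, Summable.tsum_sub (summable_NB hp0 hp1 hr) (summable_ind hp0 hp1 hr a),
          tsum_ind_eq a]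
    _ = _ := by
        congr 1
        refine tsum_congr fun z => ?_
        rw [hcast z]

lemma T1_nonneg (a : ℤ) : 0 ≤ T1 p r a :=
  tsum_nonneg fun z => mul_nonneg (NB_nonneg hp0 hp1 hr z) (le_max_right _ _)

lemma T2_nonneg (a : ℤ) : 0 ≤ T2 p r a :=
  tsum_nonneg fun z => mul_nonneg (NB_nonneg hp0 hp1 hr z) (le_max_right _ _)

end Tlem

end Stage

section GV
variable {α0 β0 : ℝ} {N : ℕ} {cv ch cb : ℝ} {W : ℕ → ℤ → ℕ → ℝ} {t : ℕ} {A : ℝ}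

lemma DmonoV {V : ℤ → ℕ → ℝ} (hC : CvxV V) :
    ∀ (u v : ℤ), u ≤ v → ∀ m : ℕ, V (u+1) m + V v m ≤ V u m + V (v+1) m := by
  have key : ∀ (n : ℕ) (u : ℤ) (m : ℕ),
      V (u+1) m + V (u+(n:ℤ)) m ≤ V u m + V (u+(n:ℤ)+1) m := by
    intro n
    induction n with
    | zero => intro u m; simp; linarith
    | succ n ih =>
        intro u m
        have h1 := ih u m
        have h2 := hC (u+(n:ℤ)) m
        show V (u+1) m + V (u+((n+1:ℕ):ℤ)) m ≤ V u m + V (u+((n+1:ℕ):ℤ)+1) m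
        rw [show (((n+1:ℕ)):ℤ) = (n:ℤ)+1 by push_cast; ring]
        rw [show u + ((n:ℤ) + 1) = u + (n:ℤ) + 1 by ring,
          show u + (n:ℤ) + 1 + 1 = u + (n:ℤ) + 2 by ring]
        linarith
  intro u v huv m
  have hn : v = u + ((v - u).toNat : ℤ) := by
    have := Int.toNat_of_nonneg (by omega : 0 ≤ v - u)
    omega
  rw [hn]
  exact key (v-u).toNat u m

lemma DW2 {V : ℤ → ℕ → ℝ} (hS : SubV V) (hC : CvxV V) :
    ∀ (u v : ℤ), u ≤ v → ∀ (m2 m1 : ℕ), m2 ≤ m1 →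
      V (u+1) m1 + V v m2 ≤ V u m1 + V (v+1) m2 := by
  intro u v huv m2 m1 hm
  have h1 := hS u m2 m1 hm
  have h2 := DmonoV hC u v huv m2
  linarith

lemma domV {V : ℤ → ℕ → ℝ} (hG : GrowV V A) (b : ℤ) (k0 : ℕ) {B : ℝ} {K : ℕ}
    (hb : |(b:ℝ)| ≤ B) (hk : k0 ≤ K) :
    DomA (fun z κ => V (b - (z:ℤ)) (k0 + z + κ)) (A*(1 + B + (K:ℝ))) (2*A) A := by
  obtain ⟨hA, hV⟩ := hG
  have hB : 0 ≤ B := le_trans (abs_nonneg _) hb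
  refine ⟨by positivity, by positivity, hA, fun z κ => ⟨(hV _ _).1, ?_⟩⟩
  have h1 := (hV (b - (z:ℤ)) (k0 + z + κ)).2
  have h2 : |((b - (z:ℤ) : ℤ):ℝ)| ≤ B + (z:ℝ) := by
    push_cast
    have := abs_sub_abs_le_abs_sub (b:ℝ) (z:ℝ)
    have h3 := abs_sub (b:ℝ) (z:ℝ)
    calc |(b:ℝ) - (z:ℝ)| ≤ |(b:ℝ)| + |(z:ℝ)| := abs_sub _ _
      _ ≤ B + (z:ℝ) := by
          have : |(z:ℝ)| = (z:ℝ) := abs_of_nonneg (Nat.cast_nonneg z)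
          linarith
  have h4 : ((k0 + z + κ : ℕ):ℝ) = (k0:ℝ) + z + κ := by push_cast; ring
  have hkr : (k0:ℝ) ≤ (K:ℝ) := by exact_mod_cast hk
  have hz : (0:ℝ) ≤ (z:ℝ) := Nat.cast_nonneg z
  have hκ : (0:ℝ) ≤ (κ:ℝ) := Nat.cast_nonneg κ
  calc V (b - (z:ℤ)) (k0 + z + κ) ≤ A * (1 + |((b - (z:ℤ) : ℤ):ℝ)| + ((k0 + z + κ : ℕ):ℝ)) := h1
    _ ≤ A * (1 + (B + z) + ((K:ℝ) + z + κ)) := by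
        apply mul_le_mul_of_nonneg_left _ hA
        rw [h4]
        linarith
    _ = A*(1 + B + (K:ℝ)) + (2*A)*(z:ℝ) + A*(κ:ℝ) := by ring

lemma G_submod (hα0 : 0 < α0) (hβ0 : 0 < β0) (hN : 1 ≤ N)
    (hch : 0 ≤ ch) (hcb : 0 ≤ cb)
    (hS : SubV (W (t+1))) (hC : CvxV (W (t+1))) (hG : GrowV (W (t+1)) A)
    {k k' : ℕ} (hkk : k ≤ k') (a : ℤ) :
    G α0 β0 N cv ch cb W t (a+1) k' + G α0 β0 N cv ch cb W t a k
      ≤ G α0 β0 N cv ch cb W t a k' + G α0 β0 N cv ch cb W t (a+1) k := by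
  have hp0 : 0 < pt β0 N t := pt_pos hβ0
  have hp1 : pt β0 N t < 1 := pt_lt_one hβ0
  have hrz : ∀ m : ℕ, (0:ℝ) < α0 + (m:ℝ) := hrz_pos hα0
  have hrκ : ∀ m : ℕ, (0:ℝ) ≤ ((N:ℝ)-1) * (α0 + (m:ℝ)) := hrκ_nonneg hα0 hN
  simp only [G_eq]
  set p := pt β0 N t
  -- T1 part
  have hT1 : T1 p (α0 + (k':ℝ)) (a+1) + T1 p (α0 + (k:ℝ)) a
      ≤ T1 p (α0 + (k':ℝ)) a + T1 p (α0 + (k:ℝ)) (a+1) := by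
    have e1 := T1_split hp0 hp1 (hrz k').le a
    have e2 := T1_split hp0 hp1 (hrz k).le a
    have e3 : Fcdf (α0 + (k':ℝ)) p a ≤ Fcdf (α0 + (k:ℝ)) p a := by
      rw [rz_shift hkk]
      exact Fcdf_anti hp0 hp1 (hrz k).le _ a
    linarith
  -- T2 part
  have hT2 : T2 p (α0 + (k':ℝ)) (a+1) + T2 p (α0 + (k:ℝ)) a
      ≤ T2 p (α0 + (k':ℝ)) a + T2 p (α0 + (k:ℝ)) (a+1) := by
    have e1 := T2_split hp0 hp1 (hrz k').le a
    have e2 := T2_split hp0 hp1 (hrz k).le a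
    have e3 : Fcdf (α0 + (k':ℝ)) p a ≤ Fcdf (α0 + (k:ℝ)) p a := by
      rw [rz_shift hkk]
      exact Fcdf_anti hp0 hp1 (hrz k).le _ a
    have e4 : (∑' z, NB (α0 + (k':ℝ)) p z) = ∑' z, NB (α0 + (k:ℝ)) p z := by
      rw [rz_shift hkk]
      exact tsum_NB_shift hp0 hp1 (hrz k).le _
    linarith
  -- EE part
  have hEE : EE p (α0 + (k':ℝ)) (((N:ℝ)-1) * (α0 + (k':ℝ)))
        (fun z κ => W (t+1) (a+1 - (z:ℤ)) (k' + z + κ))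
      + EE p (α0 + (k:ℝ)) (((N:ℝ)-1) * (α0 + (k:ℝ)))
        (fun z κ => W (t+1) (a - (z:ℤ)) (k + z + κ))
      ≤ EE p (α0 + (k':ℝ)) (((N:ℝ)-1) * (α0 + (k':ℝ)))
        (fun z κ => W (t+1) (a - (z:ℤ)) (k' + z + κ))
      + EE p (α0 + (k:ℝ)) (((N:ℝ)-1) * (α0 + (k:ℝ)))
        (fun z κ => W (t+1) (a+1 - (z:ℤ)) (k + z + κ)) := by
    rw [rκ_shift hN hkk, rz_shift hkk]
    have hB : |((a+1 : ℤ):ℝ)| ≤ |(a:ℝ)| + 1 := by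
      push_cast
      calc |(a:ℝ) + 1| ≤ |(a:ℝ)| + |(1:ℝ)| := abs_add_le _ _
        _ = |(a:ℝ)| + 1 := by norm_num
    have hBa : |(a:ℝ)| ≤ |(a:ℝ)| + 1 := by linarith [abs_nonneg (a:ℝ)]
    apply EE_submod hp0 hp1 (hrz k).le (hrκ k)
      (domV hG (a+1) k hB hkk) (domV hG a k hBa hkk)
      (domV hG (a+1) k' hB (le_refl k')) (domV hG a k' hBa (le_refl k'))
    intro i j i' j'
    have hu : a - ((i:ℤ) + (j:ℤ)) ≤ a - (i:ℤ) := by omega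
    have hm : k + i + i' ≤ k' + (i+j) + (i'+j') := by omega
    have := DW2 hS hC (a - ((i:ℤ)+(j:ℤ))) (a - (i:ℤ)) hu (k + i + i') (k' + (i+j) + (i'+j')) hm
    have e1 : a + 1 - ((i+j : ℕ):ℤ) = (a - ((i:ℤ)+(j:ℤ))) + 1 := by push_cast; ring
    have e2 : a - ((i+j : ℕ):ℤ) = a - ((i:ℤ)+(j:ℤ)) := by push_cast; ring
    have e3 : a + 1 - (i:ℤ) = (a - (i:ℤ)) + 1 := by ring
    rw [e1, e2, e3]
    exact this
  rw [show ((a+1:ℤ):ℝ) = (a:ℝ)+1 by push_cast; ring]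
  linarith [mul_le_mul_of_nonneg_left hT1 hch, mul_le_mul_of_nonneg_left hT2 hcb]

lemma G_cvx (hα0 : 0 < α0) (hβ0 : 0 < β0) (hN : 1 ≤ N)
    (hch : 0 ≤ ch) (hcb : 0 ≤ cb)
    (hC : CvxV (W (t+1))) (hG : GrowV (W (t+1)) A) (k : ℕ) (a : ℤ) :
    G α0 β0 N cv ch cb W t (a+1) k + G α0 β0 N cv ch cb W t (a+1) k
      ≤ G α0 β0 N cv ch cb W t a k + G α0 β0 N cv ch cb W t (a+2) k := by
  have hp0 : 0 < pt β0 N t := pt_pos hβ0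
  have hp1 : pt β0 N t < 1 := pt_lt_one hβ0
  have hrz : (0:ℝ) < α0 + (k:ℝ) := hrz_pos hα0 k
  have hrκ : (0:ℝ) ≤ ((N:ℝ)-1) * (α0 + (k:ℝ)) := hrκ_nonneg hα0 hN k
  simp only [G_eq]
  set p := pt β0 N t
  have hT1 : T1 p (α0 + (k:ℝ)) (a+1) + T1 p (α0 + (k:ℝ)) (a+1)
      ≤ T1 p (α0 + (k:ℝ)) a + T1 p (α0 + (k:ℝ)) (a+2) := by
    have e1 := T1_split hp0 hp1 hrz.le a
    have e2 := T1_split hp0 hp1 hrz.le (a+1)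
    have e2' : T1 p (α0 + (k:ℝ)) (a+2) = T1 p (α0 + (k:ℝ)) (a+1) + Fcdf (α0 + (k:ℝ)) p (a+1) := by
      have := T1_split hp0 hp1 hrz.le (a+1)
      rw [show a+1+1 = a+2 by ring] at this
      exact this
    have e3 : Fcdf (α0 + (k:ℝ)) p a ≤ Fcdf (α0 + (k:ℝ)) p (a+1) := by
      unfold Fcdf
      apply Finset.sum_le_sum_of_subset_of_nonneg
      · apply Finset.range_subset_range.mpr
        omega
      · intro z _ _
        exact NB_nonneg hp0 hp1 hrz.le z
    linarith
  have hT2 : T2 p (α0 + (k:ℝ)) (a+1) + T2 p (α0 + (k:ℝ)) (a+1)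
      ≤ T2 p (α0 + (k:ℝ)) a + T2 p (α0 + (k:ℝ)) (a+2) := by
    have e1 := T2_split hp0 hp1 hrz.le a
    have e2' : T2 p (α0 + (k:ℝ)) (a+1) = T2 p (α0 + (k:ℝ)) (a+2)
        + ((∑' z, NB (α0 + (k:ℝ)) p z) - Fcdf (α0 + (k:ℝ)) p (a+1)) := by
      have := T2_split hp0 hp1 hrz.le (a+1)
      rw [show a+1+1 = a+2 by ring] at this
      exact this
    have e3 : Fcdf (α0 + (k:ℝ)) p a ≤ Fcdf (α0 + (k:ℝ)) p (a+1) := by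
      unfold Fcdf
      apply Finset.sum_le_sum_of_subset_of_nonneg
      · apply Finset.range_subset_range.mpr
        omega
      · intro z _ _
        exact NB_nonneg hp0 hp1 hrz.le z
    linarith
  have hEE : EE p (α0 + (k:ℝ)) (((N:ℝ)-1) * (α0 + (k:ℝ)))
        (fun z κ => W (t+1) (a+1 - (z:ℤ)) (k + z + κ))
      + EE p (α0 + (k:ℝ)) (((N:ℝ)-1) * (α0 + (k:ℝ)))
        (fun z κ => W (t+1) (a+1 - (z:ℤ)) (k + z + κ))
      ≤ EE p (α0 + (k:ℝ)) (((N:ℝ)-1) * (α0 + (k:ℝ)))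
        (fun z κ => W (t+1) (a - (z:ℤ)) (k + z + κ))
      + EE p (α0 + (k:ℝ)) (((N:ℝ)-1) * (α0 + (k:ℝ)))
        (fun z κ => W (t+1) (a+2 - (z:ℤ)) (k + z + κ)) := by
    have hB1 : |((a+1 : ℤ):ℝ)| ≤ |(a:ℝ)| + 2 := by
      push_cast
      calc |(a:ℝ) + 1| ≤ |(a:ℝ)| + |(1:ℝ)| := abs_add_le _ _
        _ ≤ |(a:ℝ)| + 2 := by norm_num
    have hB2 : |((a+2 : ℤ):ℝ)| ≤ |(a:ℝ)| + 2 := by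
      push_cast
      calc |(a:ℝ) + 2| ≤ |(a:ℝ)| + |(2:ℝ)| := abs_add_le _ _
        _ = |(a:ℝ)| + 2 := by norm_num
    have hBa : |(a:ℝ)| ≤ |(a:ℝ)| + 2 := by linarith [abs_nonneg (a:ℝ)]
    apply EE_pair_mono hp0 hp1 hrz.le hrκ
      (domV hG (a+1) k hB1 (le_refl k)) (domV hG (a+1) k hB1 (le_refl k))
      (domV hG a k hBa (le_refl k)) (domV hG (a+2) k hB2 (le_refl k))
    intro z κ
    have := hC (a - (z:ℤ)) (k + z + κ)
    have e1 : a + 1 - (z:ℤ) = (a - (z:ℤ)) + 1 := by ring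
    have e2 : a + 2 - (z:ℤ) = (a - (z:ℤ)) + 2 := by ring
    rw [e1, e2]
    exact this
  rw [show ((a+1:ℤ):ℝ) = (a:ℝ)+1 by push_cast; ring,
    show ((a+2:ℤ):ℝ) = (a:ℝ)+2 by push_cast; ring]
  linarith [mul_le_mul_of_nonneg_left hT1 hch, mul_le_mul_of_nonneg_left hT2 hcb]

lemma G_lb (hα0 : 0 < α0) (hβ0 : 0 < β0) (hN : 1 ≤ N) (hcv : 0 ≤ cv)
    (hch : 0 ≤ ch) (hcb : 0 ≤ cb) (hG : GrowV (W (t+1)) A) (k : ℕ) {x a : ℤ} (hxa : x ≤ a) :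
    cv * (x:ℝ) ≤ G α0 β0 N cv ch cb W t a k := by
  have hp0 : 0 < pt β0 N t := pt_pos hβ0
  have hp1 : pt β0 N t < 1 := pt_lt_one hβ0
  have hrz : (0:ℝ) < α0 + (k:ℝ) := hrz_pos hα0 k
  have hrκ : (0:ℝ) ≤ ((N:ℝ)-1) * (α0 + (k:ℝ)) := hrκ_nonneg hα0 hN k
  rw [G_eq]
  have h1 := T1_nonneg hp0 hp1 hrz.le (p := pt β0 N t) (r := α0 + (k:ℝ)) a
  have h2 := T2_nonneg hp0 hp1 hrz.le (p := pt β0 N t) (r := α0 + (k:ℝ)) a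
  have h3 : 0 ≤ EE (pt β0 N t) (α0 + (k:ℝ)) (((N:ℝ)-1) * (α0 + (k:ℝ)))
      (fun z κ => W (t+1) (a - (z:ℤ)) (k + z + κ)) :=
    EE_nonneg hp0 hp1 hrz.le hrκ (fun z κ => (hG.2 _ _).1)
  have h4 : cv * (x:ℝ) ≤ cv * (a:ℝ) := by
    apply mul_le_mul_of_nonneg_left _ hcv
    exact_mod_cast hxa
  nlinarith [mul_nonneg hch h1, mul_nonneg hcb h2]
end GV


noncomputable def mfun (g : ℤ → ℝ) (x : ℤ) : ℝ := ⨅ a : {a : ℤ // x ≤ a}, g a.1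

section M7
variable {cv : ℝ} {g g' : ℤ → ℝ}

lemma mfun_bdd (hb : ∀ (y a : ℤ), y ≤ a → cv * (y:ℝ) ≤ g a) (x : ℤ) :
    BddBelow (Set.range fun a : {a : ℤ // x ≤ a} => g a.1) := by
  refine ⟨cv * (x:ℝ), ?_⟩
  rintro v ⟨a, rfl⟩
  exact hb x a.1 a.2

lemma mfun_le (hb : ∀ (y a : ℤ), y ≤ a → cv * (y:ℝ) ≤ g a) {x a : ℤ} (hxa : x ≤ a) :
    mfun g x ≤ g a :=
  ciInf_le (mfun_bdd hb x) ⟨a, hxa⟩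

lemma mfun_lb (hb : ∀ (y a : ℤ), y ≤ a → cv * (y:ℝ) ≤ g a) (x : ℤ) :
    cv * (x:ℝ) ≤ mfun g x :=
  le_ciInf fun a => hb x a.1 a.2

lemma mfun_mono (hb : ∀ (y a : ℤ), y ≤ a → cv * (y:ℝ) ≤ g a) (x : ℤ) :
    mfun g x ≤ mfun g (x+1) :=
  le_ciInf fun a => mfun_le hb (le_trans (by omega) a.2)

lemma mfun_min (hb : ∀ (y a : ℤ), y ≤ a → cv * (y:ℝ) ≤ g a) (x : ℤ) :
    mfun g x = min (g x) (mfun g (x+1)) := by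
  apply le_antisymm
  · apply le_min (mfun_le hb (le_refl x)) (mfun_mono hb x)
  · apply le_ciInf
    rintro ⟨a, ha⟩
    rcases eq_or_lt_of_le ha with h | h
    · subst h; exact min_le_left _ _
    · have hx1 : x + 1 ≤ a := by omega
      exact le_trans (min_le_right _ _) (mfun_le hb hx1)

lemma mfun_eps (hb : ∀ (y a : ℤ), y ≤ a → cv * (y:ℝ) ≤ g a) (x : ℤ) {ε : ℝ} (hε : 0 < ε) :
    ∃ a : ℤ, x ≤ a ∧ g a < mfun g x + ε := by
  have hne : Nonempty {a : ℤ // x ≤ a} := ⟨⟨x, le_refl x⟩⟩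
  have : mfun g x < mfun g x + ε := by linarith
  obtain ⟨a, ha⟩ := exists_lt_of_ciInf_lt this
  exact ⟨a.1, a.2, ha⟩

lemma Dtele (hsub : ∀ a : ℤ, g' (a+1) + g a ≤ g' a + g (a+1)) :
    ∀ (a b : ℤ), a ≤ b → g' b + g a ≤ g' a + g b := by
  have key : ∀ (n : ℕ) (a : ℤ), g' (a+(n:ℤ)) + g a ≤ g' a + g (a+(n:ℤ)) := by
    intro n
    induction n with
    | zero => intro a; simp
    | succ n ih =>
        intro a
        have h1 := ih a
        have h2 := hsub (a+(n:ℤ))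
        show g' (a+((n+1:ℕ):ℤ)) + g a ≤ g' a + g (a+((n+1:ℕ):ℤ))
        rw [show (((n+1:ℕ)):ℤ) = (n:ℤ)+1 by push_cast; ring,
          show a + ((n:ℤ)+1) = a + (n:ℤ) + 1 by ring]
        linarith
  intro a b hab
  have hn : b = a + ((b - a).toNat : ℤ) := by
    have := Int.toNat_of_nonneg (by omega : 0 ≤ b - a)
    omega
  rw [hn]
  exact key (b-a).toNat a

lemma mfun_submod
    (hb : ∀ (y a : ℤ), y ≤ a → cv * (y:ℝ) ≤ g a)
    (hb' : ∀ (y a : ℤ), y ≤ a → cv * (y:ℝ) ≤ g' a)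
    (hsub : ∀ a : ℤ, g' (a+1) + g a ≤ g' a + g (a+1)) (x : ℤ) :
    mfun g' (x+1) + mfun g x ≤ mfun g' x + mfun g (x+1) := by
  apply le_of_forall_pos_le_add
  intro ε hε
  obtain ⟨a1, ha1, hga1⟩ := mfun_eps hb (x+1) (half_pos hε)
  obtain ⟨a2, ha2, hga2⟩ := mfun_eps hb' x (half_pos hε)
  rcases le_or_gt a2 a1 with h | h
  · have e1 : mfun g' (x+1) ≤ g' a1 := mfun_le hb' (by omega)
    have e2 : mfun g x ≤ g a2 := mfun_le hb ha2
    have e3 := Dtele hsub a2 a1 h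
    linarith
  · have e1 : mfun g' (x+1) ≤ g' a2 := mfun_le hb' (by omega)
    have e2 : mfun g x ≤ g a1 := mfun_le hb (by omega)
    linarith

lemma Dmono (hcvx : ∀ a : ℤ, g (a+1) + g (a+1) ≤ g a + g (a+2)) :
    ∀ (u v : ℤ), u ≤ v → g (u+1) + g v ≤ g u + g (v+1) := by
  have key : ∀ (n : ℕ) (u : ℤ), g (u+1) + g (u+(n:ℤ)) ≤ g u + g (u+(n:ℤ)+1) := by
    intro n
    induction n with
    | zero => intro u; simp; linarith
    | succ n ih =>
        intro u
        have h1 := ih u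
        have h2 := hcvx (u+(n:ℤ))
        show g (u+1) + g (u+((n+1:ℕ):ℤ)) ≤ g u + g (u+((n+1:ℕ):ℤ)+1)
        rw [show (((n+1:ℕ)):ℤ) = (n:ℤ)+1 by push_cast; ring]
        rw [show u + ((n:ℤ)+1) = u + (n:ℤ) + 1 by ring,
          show u + (n:ℤ) + 1 + 1 = u + (n:ℤ) + 2 by ring]
        linarith
  intro u v huv
  have hn : v = u + ((v - u).toNat : ℤ) := by
    have := Int.toNat_of_nonneg (by omega : 0 ≤ v - u)
    omega
  rw [hn]
  exact key (v-u).toNat u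

/-- Linear growth of a discrete convex function beyond `x+1`. -/
lemma tele_lin (hcvx : ∀ a : ℤ, g (a+1) + g (a+1) ≤ g a + g (a+2)) (x : ℤ) :
    ∀ n : ℕ, g (x+1) + (n:ℝ) * (g (x+1) - g x) ≤ g (x+1+(n:ℤ)) := by
  intro n
  induction n with
  | zero => simp
  | succ n ih =>
      have h2 := Dmono hcvx x (x+1+(n:ℤ)) (by omega)
      have e2 : x + 1 + ((n+1:ℕ):ℤ) = (x + 1 + (n:ℤ)) + 1 := by push_cast; ring
      rw [e2]
      push_cast
      nlinarith [h2, ih]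

lemma mfun_cvx (hb : ∀ (y a : ℤ), y ≤ a → cv * (y:ℝ) ≤ g a)
    (hcvx : ∀ a : ℤ, g (a+1) + g (a+1) ≤ g a + g (a+2)) (x : ℤ) :
    mfun g (x+1) + mfun g (x+1) ≤ mfun g x + mfun g (x+2) := by
  have hmin0 := mfun_min hb x
  have hmin1 := mfun_min hb (x+1)
  rw [show x+1+1 = x+2 by ring] at hmin1
  rcases le_total (g (x+1)) (mfun g (x+2)) with hle | hle
  · -- m(x+1) = G(x+1)
    have hm1 : mfun g (x+1) = g (x+1) := by rw [hmin1, min_eq_left hle]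
    rcases le_total (g x) (g (x+1)) with hxx | hxx
    · -- m(x) = g x; need g x + m(x+2) ≥ 2 g(x+1)
      have hm0 : mfun g x = g x := by
        rw [hmin0, hm1, min_eq_left hxx]
      have hkey : g (x+1) + (g (x+1) - g x) ≤ mfun g (x+2) := by
        apply le_ciInf
        rintro ⟨a, ha⟩
        have hn : a = x + 1 + (((a - x - 1).toNat) : ℤ) := by
          have := Int.toNat_of_nonneg (by omega : 0 ≤ a - x - 1)
          omega
        have h1 := tele_lin hcvx x (a - x - 1).toNat
        rw [← hn] at h1
        have hn1 : (1:ℝ) ≤ (((a - x - 1).toNat):ℝ) := by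
          have : 1 ≤ (a-x-1).toNat := by omega
          exact_mod_cast this
        nlinarith [h1]
      rw [hm0, hm1]
      linarith
    · have hm0 : mfun g x = g (x+1) := by
        rw [hmin0, hm1, min_eq_right hxx]
      have : mfun g (x+1) ≤ mfun g (x+2) := by
        rw [hmin1]; exact min_le_right _ _
      rw [hm0, hm1]
      linarith
  · -- m(x+1) = m(x+2)
    have hm1 : mfun g (x+1) = mfun g (x+2) := by rw [hmin1, min_eq_right hle]
    -- need m(x) ≥ m(x+2)
    have hkey : ∀ ε : ℝ, 0 < ε → mfun g (x+2) ≤ mfun g x + ε := by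
      intro ε hε
      obtain ⟨a, ha, hga⟩ := mfun_eps hb (x+2) hε
      rcases le_total (g (x+1) - g x) 0 with hΔ | hΔ
      · -- g x ≥ g (x+1) ≥ m(x+2)
        have : mfun g (x+2) ≤ mfun g x := by
          rw [hmin0]
          apply le_min
          · linarith
          · rw [← hm1]
        linarith
      · -- Δ > 0 case: Δ ≤ ε since n·Δ < ε
        have hn : a = x + 1 + (((a - x - 1).toNat) : ℤ) := by
          have := Int.toNat_of_nonneg (by omega : 0 ≤ a - x - 1)
          omega
        have h1 := tele_lin hcvx x (a - x - 1).toNat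
        rw [← hn] at h1
        have hn1 : (1:ℝ) ≤ (((a - x - 1).toNat):ℝ) := by
          have : 1 ≤ (a-x-1).toNat := by omega
          exact_mod_cast this
        have hΔε : g (x+1) - g x ≤ ε := by
          nlinarith [h1, hga, hle]
        have : mfun g (x+2) - ε ≤ mfun g x := by
          rw [hmin0]
          apply le_min
          · linarith
          · rw [← hm1]
            linarith
        linarith
    have : mfun g (x+2) ≤ mfun g x := by
      by_contra hcon
      push_neg at hcon
      have := hkey ((mfun g (x+2) - mfun g x)/2) (by linarith)
      linarith
    rw [hm1]
    linarith

end M7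






















section M8
variable {α0 β0 : ℝ} {N T : ℕ} {cv ch cb : ℝ} {W : ℕ → ℤ → ℕ → ℝ} {t : ℕ} {A : ℝ}

lemma moment1' {p : ℝ} (hp0 : 0 < p) (hp1 : p < 1) {r : ℝ} (hr : 0 ≤ r) :
    ∑' z, NB r p z * (z:ℝ) = r * ((1-p)/p) * ∑' z, NB (r+1) p z := by
  rcases eq_or_lt_of_le hr with h | h
  · subst h
    rw [tsum_eq_single 0]
    · simp [NB]
    · intro z hz
      simp [NB, hz]
  · exact moment1 hp0 hp1 h

lemma T1_le {p r : ℝ} (hp0 : 0 < p) (hp1 : p < 1) (hr : 0 ≤ r) (a : ℤ) :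
    T1 p r a ≤ |(a:ℝ)| * ∑' z, NB r p z := by
  unfold T1
  rw [← tsum_mul_left]
  apply Summable.tsum_le_tsum _ (summable_T1 hp0 hp1 hr a) ((summable_NB hp0 hp1 hr).mul_left _)
  intro z
  rw [mul_comm (|(a:ℝ)|) (NB r p z)]
  apply mul_le_mul_of_nonneg_left _ (NB_nonneg hp0 hp1 hr z)
  rw [max_le_iff]
  constructor
  · have := le_abs_self (a:ℝ)
    have hz : (0:ℝ) ≤ (z:ℝ) := Nat.cast_nonneg z
    linarith
  · exact abs_nonneg _

lemma T2_le {p r : ℝ} (hp0 : 0 < p) (hp1 : p < 1) (hr : 0 ≤ r) (a : ℤ) :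
    T2 p r a ≤ |(a:ℝ)| * (∑' z, NB r p z) + 1 * (∑' z, NB r p z * (z:ℝ)) := by
  unfold T2
  rw [← tsum_NB_affine hp0 hp1 hr (|(a:ℝ)|) 1]
  have hsum2 : Summable (fun z : ℕ => NB r p z * (|(a:ℝ)| + 1*(z:ℝ))) := by
    have h1 : Summable (fun z => NB r p z * |(a:ℝ)|) := (summable_NB hp0 hp1 hr).mul_right _
    have h2 : Summable (fun z : ℕ => (NB r p z * (z:ℝ)) * 1) := (summable_NB_id hp0 hp1 hr).mul_right _
    exact (h1.add h2).congr fun z => by ring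
  apply Summable.tsum_le_tsum _ (summable_T2 hp0 hp1 hr a) hsum2
  intro z
  apply mul_le_mul_of_nonneg_left _ (NB_nonneg hp0 hp1 hr z)
  rw [max_le_iff]
  have h1 := neg_le_abs (a:ℝ)
  have hz : (0:ℝ) ≤ (z:ℝ) := Nat.cast_nonneg z
  have h2 := abs_nonneg (a:ℝ)
  constructor <;> nlinarith

lemma grow_step (hα0 : 0 < α0) (hβ0 : 0 < β0) (hN : 1 ≤ N) (hcv : 0 ≤ cv)
    (hch : 0 ≤ ch) (hcb : 0 ≤ cb) (hG : GrowV (W (t+1)) A)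
    (hrec : ∀ (x : ℤ) (k : ℕ), W t x k
      = mfun (fun a => G α0 β0 N cv ch cb W t a k) x - cv * (x:ℝ)) :
    ∃ A', GrowV (W t) A' := by
  have hp0 : 0 < pt β0 N t := pt_pos hβ0
  have hp1 : pt β0 N t < 1 := pt_lt_one hβ0
  set p := pt β0 N t with hpdef
  have hq : 0 ≤ (1-p)/p := by
    have : 0 ≤ 1 - p := by linarith
    positivity
  set S0 := ∑' z, NB α0 p z with hS0def
  set S1 := ∑' z, NB (α0+1) p z with hS1def
  set Sκ0 := ∑' z, NB (((N:ℝ)-1)*α0) p z with hSκ0def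
  set Sκ1 := ∑' z, NB (((N:ℝ)-1)*α0+1) p z with hSκ1def
  have hS0 : 0 ≤ S0 := tsum_nonneg fun z => NB_nonneg hp0 hp1 hα0.le z
  have hS1 : 0 ≤ S1 := tsum_nonneg fun z => NB_nonneg hp0 hp1 (by linarith) z
  have hrκ0 : (0:ℝ) ≤ ((N:ℝ)-1)*α0 := by
    have := hrκ_nonneg (α0 := α0) hα0 hN 0
    simpa using this
  have hSκ0' : 0 ≤ Sκ0 := tsum_nonneg fun z => NB_nonneg hp0 hp1 hrκ0 z
  have hSκ1' : 0 ≤ Sκ1 := tsum_nonneg fun z => NB_nonneg hp0 hp1 (by linarith) z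
  -- constants
  set c1 := (α0+1) * ((1-p)/p) * S1 with hc1def
  set c2 := ((N:ℝ)-1) * (α0+1) * ((1-p)/p) * Sκ1 with hc2def
  have hα1 : (0:ℝ) ≤ α0 + 1 := by linarith
  have hN1 : (0:ℝ) ≤ (N:ℝ) - 1 := by
    have : (1:ℝ) ≤ (N:ℝ) := by exact_mod_cast hN
    linarith
  have hc1 : 0 ≤ c1 := by positivity
  have hc2 : 0 ≤ c2 := by positivity
  -- per-k facts
  have hSz_const : ∀ k : ℕ, (∑' z, NB (α0+(k:ℝ)) p z) = S0 := fun k => tsum_NB_shift hp0 hp1 hα0.le k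
  have hSκ_const : ∀ k : ℕ, (∑' z, NB (((N:ℝ)-1)*(α0+(k:ℝ))) p z) = Sκ0 := by
    intro k
    rw [show ((N:ℝ)-1)*(α0+(k:ℝ)) = ((N:ℝ)-1)*α0 + (((N-1)*k : ℕ):ℝ) by
      push_cast [Nat.cast_sub hN]; ring]
    exact tsum_NB_shift hp0 hp1 hrκ0 _
  have hEz_le : ∀ k : ℕ, (∑' z, NB (α0+(k:ℝ)) p z * (z:ℝ)) ≤ c1 * (1+(k:ℝ)) := by
    intro k
    rw [moment1' hp0 hp1 (hrz_pos hα0 k).le]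
    have e1 : (∑' z, NB ((α0+(k:ℝ))+1) p z) = S1 := by
      rw [show (α0+(k:ℝ))+1 = (α0+1) + (k:ℝ) by ring]
      exact tsum_NB_shift hp0 hp1 (by linarith) k
    rw [e1, hc1def]
    have hk : (0:ℝ) ≤ (k:ℝ) := Nat.cast_nonneg k
    have hkey : α0 + (k:ℝ) ≤ (α0+1)*(1+(k:ℝ)) := by nlinarith
    nlinarith [mul_nonneg hq hS1, mul_nonneg (mul_nonneg hα1 hq) hS1]
  have hEκ_le : ∀ k : ℕ, (∑' z, NB (((N:ℝ)-1)*(α0+(k:ℝ))) p z * (z:ℝ)) ≤ c2 * (1+(k:ℝ)) := by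
    intro k
    rw [moment1' hp0 hp1 (hrκ_nonneg hα0 hN k)]
    have e1 : (∑' z, NB (((N:ℝ)-1)*(α0+(k:ℝ))+1) p z) = Sκ1 := by
      rw [show ((N:ℝ)-1)*(α0+(k:ℝ))+1 = (((N:ℝ)-1)*α0+1) + (((N-1)*k : ℕ):ℝ) by
        push_cast [Nat.cast_sub hN]; ring]
      exact tsum_NB_shift hp0 hp1 (by linarith) _
    rw [e1, hc2def]
    have hk : (0:ℝ) ≤ (k:ℝ) := Nat.cast_nonneg k
    have hkey : ((N:ℝ)-1)*(α0 + (k:ℝ)) ≤ ((N:ℝ)-1)*(α0+1)*(1+(k:ℝ)) := by nlinarith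
    nlinarith [mul_nonneg hq hSκ1', mul_nonneg (mul_nonneg (mul_nonneg hN1 hα1) hq) hSκ1']
  obtain ⟨hA, hV⟩ := hG
  refine ⟨ch*S0 + cb*S0 + cb*c1 + A*(S0*Sκ0) + 2*A*(c1*Sκ0) + A*(S0*c2), ?_, ?_⟩
  · positivity
  intro x k
  have hb : ∀ (y a : ℤ), y ≤ a → cv * (y:ℝ) ≤ G α0 β0 N cv ch cb W t a k :=
    fun y a h => G_lb hα0 hβ0 hN hcv hch hcb ⟨hA, hV⟩ k h
  constructor
  · rw [hrec x k]
    have := mfun_lb hb x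
    linarith
  · rw [hrec x k]
    have h1 : mfun (fun a => G α0 β0 N cv ch cb W t a k) x ≤ G α0 β0 N cv ch cb W t x k :=
      mfun_le hb (le_refl x)
    have h2 : G α0 β0 N cv ch cb W t x k - cv * (x:ℝ)
        ≤ ch * T1 p (α0+(k:ℝ)) x + cb * T2 p (α0+(k:ℝ)) x
          + EE p (α0+(k:ℝ)) (((N:ℝ)-1)*(α0+(k:ℝ))) (fun z κ => W (t+1) (x - (z:ℤ)) (k+z+κ)) := by
      rw [G_eq]
      linarith
    have hT1 := T1_le hp0 hp1 (hrz_pos hα0 k).le x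
    have hT2 := T2_le hp0 hp1 (hrz_pos hα0 k).le x
    have hEE := EE_le hp0 hp1 (hrz_pos hα0 k).le (hrκ_nonneg hα0 hN k)
      (domV ⟨hA, hV⟩ x k (le_refl |(x:ℝ)|) (le_refl k))
    rw [hSz_const k] at hT1 hT2
    rw [hSz_const k, hSκ_const k] at hEE
    have hEz := hEz_le k
    have hEκ := hEκ_le k
    set X := |(x:ℝ)| with hXdef
    have hX : 0 ≤ X := abs_nonneg _
    have hk : (0:ℝ) ≤ (k:ℝ) := Nat.cast_nonneg k
    have hS : (1:ℝ) ≤ 1 + X + (k:ℝ) := by linarith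
    -- combine
    have e1 : ch * T1 p (α0+(k:ℝ)) x ≤ ch*S0 * (1+X+(k:ℝ)) := by
      have m1 := mul_le_mul_of_nonneg_left hT1 hch
      nlinarith [m1, mul_nonneg hch hS0, mul_nonneg (mul_nonneg hch hS0) hk]
    have e2 : cb * T2 p (α0+(k:ℝ)) x ≤ (cb*S0 + cb*c1) * (1+X+(k:ℝ)) := by
      have h3 : T2 p (α0+(k:ℝ)) x ≤ X * S0 + c1*(1+(k:ℝ)) := by linarith [hEz]
      have m2 := mul_le_mul_of_nonneg_left h3 hcb
      nlinarith [m2, mul_nonneg hcb hS0, mul_nonneg (mul_nonneg hcb hS0) hk,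
        mul_nonneg (mul_nonneg hcb hc1) hX]
    have e3 : EE p (α0+(k:ℝ)) (((N:ℝ)-1)*(α0+(k:ℝ))) (fun z κ => W (t+1) (x - (z:ℤ)) (k+z+κ))
        ≤ (A*(S0*Sκ0) + 2*A*(c1*Sκ0) + A*(S0*c2)) * (1+X+(k:ℝ)) := by
      have hEκ0 : 0 ≤ ∑' κ, NB (((N:ℝ)-1)*(α0+(k:ℝ))) p κ * (κ:ℝ) :=
        tsum_nonneg fun κ => mul_nonneg (NB_nonneg hp0 hp1 (hrκ_nonneg hα0 hN k) κ) (Nat.cast_nonneg κ)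
      have hEz0 : 0 ≤ ∑' z, NB (α0+(k:ℝ)) p z * (z:ℝ) :=
        tsum_nonneg fun z => mul_nonneg (NB_nonneg hp0 hp1 (hrz_pos hα0 k).le z) (Nat.cast_nonneg z)
      calc EE p (α0+(k:ℝ)) (((N:ℝ)-1)*(α0+(k:ℝ))) (fun z κ => W (t+1) (x - (z:ℤ)) (k+z+κ))
          ≤ A*(1 + X + (k:ℝ)) * S0 * Sκ0
              + 2*A * (∑' z, NB (α0+(k:ℝ)) p z * (z:ℝ)) * Sκ0
              + A * S0 * (∑' κ, NB (((N:ℝ)-1)*(α0+(k:ℝ))) p κ * (κ:ℝ)) := by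
            convert hEE using 2 <;> ring
        _ ≤ A*(1 + X + (k:ℝ)) * S0 * Sκ0 + 2*A * (c1*(1+(k:ℝ))) * Sκ0 + A * S0 * (c2*(1+(k:ℝ))) := by
            have b1 : 2*A * (∑' z, NB (α0+(k:ℝ)) p z * (z:ℝ)) * Sκ0 ≤ 2*A * (c1*(1+(k:ℝ))) * Sκ0 := by
              apply mul_le_mul_of_nonneg_right _ hSκ0'
              apply mul_le_mul_of_nonneg_left hEz (by positivity)
            have b2 : A * S0 * (∑' κ, NB (((N:ℝ)-1)*(α0+(k:ℝ))) p κ * (κ:ℝ))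
                ≤ A * S0 * (c2*(1+(k:ℝ))) := by
              apply mul_le_mul_of_nonneg_left hEκ (by positivity)
            linarith
        _ ≤ (A*(S0*Sκ0) + 2*A*(c1*Sκ0) + A*(S0*c2)) * (1+X+(k:ℝ)) := by
            nlinarith [mul_nonneg hA (mul_nonneg hS0 hSκ0'), mul_nonneg hA (mul_nonneg hc1 hSκ0'),
              mul_nonneg hA (mul_nonneg hS0 hc2), mul_nonneg (mul_nonneg hA hc1) (mul_nonneg hSκ0' hk),
              mul_nonneg (mul_nonneg hA hS0) (mul_nonneg hc2 hk),
              mul_nonneg (mul_nonneg hA hc1) (mul_nonneg hSκ0' hX),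
              mul_nonneg (mul_nonneg hA hS0) (mul_nonneg hc2 hX)]
    linarith

end M8


end Aux2

/-- The first difference `ΔW_t(x,k) = W_t(x+1,k) − W_t(x,k)` is non-increasing in `k`. -/
theorem deltaW_antitone_k
    (α0 β0 : ℝ) (hα0 : 0 < α0) (hβ0 : 0 < β0)
    (N T : ℕ) (hN : 1 ≤ N) (hT : 1 ≤ T)
    (cv ch cb : ℝ) (hcv : 0 ≤ cv) (hch : 0 < ch) (hcb : 0 < cb)
    (W : ℕ → ℤ → ℕ → ℝ)
    (hWT : ∀ x k, W T x k = 0)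
    (hW : ∀ t, t < T → ∀ x k,
      W t x k = (⨅ a : {a : ℤ // x ≤ a}, G α0 β0 N cv ch cb W t a.1 k) - cv * (x : ℝ)) :
    ∀ t, t < T → ∀ (x : ℤ) (k k' : ℕ), k ≤ k' →
      W t (x + 1) k' - W t x k' ≤ W t (x + 1) k - W t x k := by
  have base : SubV (W T) ∧ CvxV (W T) ∧ ∃ A, GrowV (W T) A := by
    refine ⟨?_, ?_, ⟨0, le_refl 0, ?_⟩⟩
    · intro x k k' _
      simp [hWT]
    · intro x k
      simp [hWT]
    · intro x k
      simp [hWT]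
  have step : ∀ s, s < T → (SubV (W (s+1)) ∧ CvxV (W (s+1)) ∧ ∃ A, GrowV (W (s+1)) A)
      → (SubV (W s) ∧ CvxV (W s) ∧ ∃ A, GrowV (W s) A) := by
    rintro s hsT ⟨hS, hC, A, hGr⟩
    have hrec : ∀ (x : ℤ) (k : ℕ),
        W s x k = mfun (fun a => G α0 β0 N cv ch cb W s a k) x - cv * (x:ℝ) := by
      intro x k
      rw [hW s hsT x k]
      rfl
    have hb : ∀ k : ℕ, ∀ (y a : ℤ), y ≤ a → cv * (y:ℝ) ≤ G α0 β0 N cv ch cb W s a k :=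
      fun k y a h => G_lb hα0 hβ0 hN hcv hch.le hcb.le hGr k h
    refine ⟨?_, ?_, ?_⟩
    · intro x k k' hkk
      simp only [hrec]
      have := mfun_submod (hb k) (hb k')
        (fun a => G_submod hα0 hβ0 hN hch.le hcb.le hS hC hGr hkk a) x
      push_cast
      linarith
    · intro x k
      simp only [hrec]
      have := mfun_cvx (hb k)
        (fun a => G_cvx hα0 hβ0 hN hch.le hcb.le hC hGr k a) x
      push_cast
      linarith
    · exact grow_step hα0 hβ0 hN hcv hch.le hcb.le hGr hrec
  have all : ∀ n s, s + n = T → (SubV (W s) ∧ CvxV (W s) ∧ ∃ A, GrowV (W s) A) := by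
    intro n
    induction n with
    | zero =>
        intro s hs
        have : s = T := by omega
        rw [this]
        exact base
    | succ n ih =>
        intro s hs
        exact step s (by omega) (ih (s+1) (by omega))
  intro t ht x k k' hkk
  have hg := (all (T - t) t (by omega)).1
  have := hg x k k' hkk
  linarith
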